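/- arXiv:1905.03654 — 4 statements merged into one kernel-verified Lean document; each statement's English description precedes it below -/
import Mathlib

section
/- Let three distinct vertices u, v, w be placed in a uniformly random linear arrangement of n ≥ 3 positions, and let d_i = |π(u) - π(w)| and d_j = |π(v) - π(w)| be the lengths of the two edges {u,w} and {v,w} sharing vertex w. Then E[d_i d_j] = (n+1)(7n+4)/60. -/
open Finset

private lemma psum1 (n : ℕ) : ∑ i ∈ range n, (i:ℚ) = n*(n-1)/2 := by
  induction n with
  | zero => simp
  | succ m ih => rw [sum_range_succ, ih]; push_cast; ring

private lemma psum2 (n : ℕ) : ∑ i ∈ range n, (i:ℚ)^2 = n*(n-1)*(2*n-1)/6 := by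
  induction n with
  | zero => simp
  | succ m ih => rw [sum_range_succ, ih]; push_cast; ring

private lemma psum3 (n : ℕ) : ∑ i ∈ range n, (i:ℚ)^3 = (n*(n-1)/2)^2 := by
  induction n with
  | zero => simp
  | succ m ih => rw [sum_range_succ, ih]; push_cast; ring

private lemma psum4 (n : ℕ) : ∑ i ∈ range n, (i:ℚ)^4 = n*(n-1)*(2*n-1)*(3*n^2-3*n-1)/30 := by
  induction n with
  | zero => simp
  | succ m ih => rw [sum_range_succ, ih]; push_cast; ring

private lemma sumAbs (n c : ℕ) (hc : c < n) :
    ∑ a ∈ range n, |(a:ℚ) - c| = ((c:ℚ)*(c+1) + ((n:ℚ)-1-c)*((n:ℚ)-c))/2 := by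
  have key : ∀ m : ℕ, ∑ a ∈ range m, ((a:ℚ) - c) = m*(m-1)/2 - m*c := by
    intro m
    rw [sum_sub_distrib, psum1, sum_const, card_range, nsmul_eq_mul]
  have hsplit : ∑ a ∈ range (c+1), |(a:ℚ) - c| + ∑ a ∈ Finset.Ico (c+1) n, |(a:ℚ) - c|
      = ∑ a ∈ range n, |(a:ℚ) - c| := by
    simp only [range_eq_Ico]
    exact Finset.sum_Ico_consecutive _ (Nat.zero_le _) hc
  have hsplit2 : ∑ a ∈ range (c+1), ((a:ℚ) - c) + ∑ a ∈ Finset.Ico (c+1) n, ((a:ℚ) - c)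
      = ∑ a ∈ range n, ((a:ℚ) - c) := by
    simp only [range_eq_Ico]
    exact Finset.sum_Ico_consecutive _ (Nat.zero_le _) hc
  have h1 : ∑ a ∈ range (c+1), |(a:ℚ) - c| = -∑ a ∈ range (c+1), ((a:ℚ) - c) := by
    rw [← sum_neg_distrib]
    refine sum_congr rfl fun a ha => ?_
    have : (a:ℚ) ≤ c := by exact_mod_cast Nat.lt_succ_iff.mp (mem_range.mp ha)
    rw [abs_of_nonpos (by linarith)]
  have h2 : ∑ a ∈ Finset.Ico (c+1) n, |(a:ℚ) - c| = ∑ a ∈ Finset.Ico (c+1) n, ((a:ℚ) - c) := by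
    refine sum_congr rfl fun a ha => ?_
    have : (c:ℚ) ≤ a := by
      exact_mod_cast Nat.le_of_succ_le (Finset.mem_Ico.mp ha).1
    exact abs_of_nonneg (by linarith)
  have e2 : ∑ a ∈ Finset.Ico (c+1) n, ((a:ℚ) - c)
      = ∑ a ∈ range n, ((a:ℚ) - c) - ∑ a ∈ range (c+1), ((a:ℚ) - c) := by
    rw [← hsplit2]; ring
  rw [← hsplit, h1, h2, e2, key n, key (c+1)]
  push_cast
  ring

private lemma sumSq (n c : ℕ) :
    ∑ a ∈ range n, ((a:ℚ) - c)^2 = n*(n-1)*(2*n-1)/6 - c*n*(n-1) + n*c^2 := by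
  have pw : ∀ a : ℕ, ((a:ℚ) - c)^2 = (a:ℚ)^2 - (2*c)*(a:ℚ) + c^2 := fun a => by ring
  simp_rw [pw]
  rw [sum_add_distrib, sum_sub_distrib, ← mul_sum, psum2, psum1, sum_const, card_range,
    nsmul_eq_mul]
  ring

private lemma keySum (n : ℕ) :
    ∑ c ∈ range n, ((∑ a ∈ range n, |(a:ℚ) - c|)^2 - ∑ a ∈ range n, ((a:ℚ) - c)^2)
      = (n:ℚ)*((n:ℚ)-1)*((n:ℚ)-2)*((n:ℚ)+1)*(7*(n:ℚ)+4)/60 := by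
  have step : ∀ c ∈ range n,
      (∑ a ∈ range n, |(a:ℚ) - c|)^2 - ∑ a ∈ range n, ((a:ℚ) - c)^2
        = (c:ℚ)^4 + (2-2*(n:ℚ))*(c:ℚ)^3 + (2*(n:ℚ)^2-4*(n:ℚ)+1)*(c:ℚ)^2
          + (-(n:ℚ)^3+3*(n:ℚ)^2-2*(n:ℚ))*(c:ℚ)
          + ((n:ℚ)^4/4 - 5*(n:ℚ)^3/6 + 3*(n:ℚ)^2/4 - (n:ℚ)/6) := by
    intro c hc
    rw [sumAbs n c (mem_range.mp hc), sumSq]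
    ring
  rw [sum_congr rfl step]
  rw [sum_add_distrib, sum_add_distrib, sum_add_distrib, sum_add_distrib,
    ← mul_sum, ← mul_sum, ← mul_sum, psum1, psum2, psum3, psum4, sum_const, card_range,
    nsmul_eq_mul]
  ring

private lemma sum_pairs {n : ℕ} (f : Fin n → Fin n → ℚ) (hf : ∀ c, f c c = 0) (c : Fin n) :
    (∑ a : Fin n, ∑ b : Fin n, if a ≠ b ∧ a ≠ c ∧ b ≠ c then f a c * f b c else 0)
      = (∑ a : Fin n, f a c)^2 - ∑ a : Fin n, (f a c)^2 := by
  have pw : ∀ a b : Fin n, (if a ≠ b ∧ a ≠ c ∧ b ≠ c then f a c * f b c else 0)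
      = f a c * f b c - (if a = b then f a c * f b c else 0) := by
    intro a b
    by_cases h1 : a = b
    · simp [h1]
    · by_cases h2 : a = c
      · simp [h1, h2, hf]
      · by_cases h3 : b = c
        · simp [h1, h2, h3, hf]
        · simp [h1, h2, h3]
  simp_rw [pw, sum_sub_distrib, Finset.sum_ite_eq, mem_univ, if_pos, ← mul_sum]
  rw [← sum_mul, sq]
  congr 1
  exact sum_congr rfl fun a _ => (sq (f a c)).symm

private lemma sum_ones {n : ℕ} (c : Fin n) :
    (∑ a : Fin n, ∑ b : Fin n, if a ≠ b ∧ a ≠ c ∧ b ≠ c then (1:ℚ) else 0)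
      = ((n:ℚ)-1)*((n:ℚ)-2) := by
  have inner : ∀ a : Fin n, (∑ b : Fin n, if a ≠ b ∧ a ≠ c ∧ b ≠ c then (1:ℚ) else 0)
      = if a = c then 0 else ((n:ℚ)-2) := by
    intro a
    by_cases h2 : a = c
    · simp [h2]
    · rw [if_neg h2]
      have pw : ∀ b : Fin n, (if a ≠ b ∧ a ≠ c ∧ b ≠ c then (1:ℚ) else 0)
          = 1 - (if a = b then (1:ℚ) else 0) - (if b = c then (1:ℚ) else 0)
            + (if a = b then (1:ℚ) else 0) * (if b = c then (1:ℚ) else 0) := by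
        intro b
        by_cases h1 : a = b <;> by_cases h3 : b = c <;> simp [h1, h2, h3]
      simp_rw [pw]
      have h4 : ∑ b : Fin n, ((if a = b then (1:ℚ) else 0) * (if b = c then (1:ℚ) else 0)) = 0 := by
        refine Finset.sum_eq_zero fun b _ => ?_
        by_cases h1 : a = b
        · by_cases h3 : b = c
          · exact absurd (h1.trans h3) h2
          · simp [h3]
        · simp [h1]
      rw [sum_add_distrib, sum_sub_distrib, sum_sub_distrib, h4,
        Finset.sum_ite_eq univ a (fun _ => (1:ℚ)), Finset.sum_ite_eq' univ c (fun _ => (1:ℚ)),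
        sum_const, card_univ, Fintype.card_fin, nsmul_eq_mul]
      simp
      ring
  rw [sum_congr rfl fun a _ => inner a]
  have pw2 : ∀ a : Fin n, (if a = c then (0:ℚ) else ((n:ℚ)-2))
      = ((n:ℚ)-2) - (if a = c then ((n:ℚ)-2) else 0) := by
    intro a; by_cases h : a = c <;> simp [h]
  simp_rw [pw2, sum_sub_distrib, Finset.sum_ite_eq' univ c (fun _ => ((n:ℚ)-2)),
    sum_const, card_univ, Fintype.card_fin, nsmul_eq_mul, mem_univ, if_pos]
  ring

private lemma exists_perm_three' {α : Type*} [DecidableEq α] {a b c a' b' c' : α}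
    (hab : a ≠ b) (hac : a ≠ c) (hbc : b ≠ c)
    (hab' : a' ≠ b') (hac' : a' ≠ c') (hbc' : b' ≠ c') :
    ∃ σ : Equiv.Perm α, σ a = a' ∧ σ b = b' ∧ σ c = c' := by
  set σ1 := Equiv.swap a a' with hσ1
  set σ2 := Equiv.swap (σ1 b) b' with hσ2
  set σ3 := Equiv.swap (σ2 (σ1 c)) c' with hσ3
  have h1a : σ1 a = a' := Equiv.swap_apply_left a a'
  have hba : σ1 b ≠ a' := by
    rw [← h1a]; exact fun h => hab (σ1.injective h).symm
  have h2a : σ2 a' = a' := Equiv.swap_apply_of_ne_of_ne (Ne.symm hba) hab'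
  have h2b : σ2 (σ1 b) = b' := Equiv.swap_apply_left _ _
  have hca : σ2 (σ1 c) ≠ a' := by
    rw [← h2a, ← h1a]
    exact fun h => hac (σ1.injective (σ2.injective h)).symm
  have hcb : σ2 (σ1 c) ≠ b' := by
    rw [← h2b]
    exact fun h => hbc (σ1.injective (σ2.injective h)).symm
  have h3a : σ3 a' = a' := Equiv.swap_apply_of_ne_of_ne (Ne.symm hca) hac'
  have h3b : σ3 b' = b' := Equiv.swap_apply_of_ne_of_ne (Ne.symm hcb) hbc'
  have h3c : σ3 (σ2 (σ1 c)) = c' := Equiv.swap_apply_left _ _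
  refine ⟨σ3 * σ2 * σ1, ?_, ?_, ?_⟩
  · simp only [Equiv.Perm.mul_apply, h1a, h2a, h3a]
  · simp only [Equiv.Perm.mul_apply, h2b, h3b]
  · simp only [Equiv.Perm.mul_apply, h3c]


/-- For three distinct vertices `u, v, w` in a uniformly random linear arrangement of
`n ≥ 3` positions, with `d_i, d_j` the lengths of the two edges `{u,w}` and `{v,w}`
sharing vertex `w`, one has `E[d_i d_j] = (n+1)(7n+4)/60`. -/
theorem expected_product_shared_vertex (n : ℕ) (hn : 3 ≤ n) (u v w : Fin n)
    (huv : u ≠ v) (huw : u ≠ w) (hvw : v ≠ w) :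
    (∑ π : Equiv.Perm (Fin n),
        |((π u : ℕ) : ℚ) - ((π w : ℕ) : ℚ)| * |((π v : ℕ) : ℚ) - ((π w : ℕ) : ℚ)|)
      / (Nat.factorial n : ℚ)
      = ((n : ℚ) + 1) * (7 * (n : ℚ) + 4) / 60 := by
  classical
  set D : Finset (Fin n × Fin n × Fin n) :=
    univ.filter (fun t => t.1 ≠ t.2.1 ∧ t.1 ≠ t.2.2 ∧ t.2.1 ≠ t.2.2) with hD
  set g : Equiv.Perm (Fin n) → Fin n × Fin n × Fin n := fun π => (π u, π v, π w) with hg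
  set F : Fin n × Fin n × Fin n → ℚ :=
    fun t => |((t.1 : ℕ) : ℚ) - ((t.2.2 : ℕ) : ℚ)| * |((t.2.1 : ℕ) : ℚ) - ((t.2.2 : ℕ) : ℚ)|
    with hF
  have hgt : ∀ (π : Equiv.Perm (Fin n)) (t : Fin n × Fin n × Fin n),
      g π = t ↔ π u = t.1 ∧ π v = t.2.1 ∧ π w = t.2.2 := by
    intro π t; rw [hg]; simp [Prod.ext_iff]
  have hgD : ∀ π : Equiv.Perm (Fin n), g π ∈ D := by
    intro π
    rw [hD, mem_filter]
    exact ⟨mem_univ _, fun h => huv (π.injective h), fun h => huw (π.injective h),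
      fun h => hvw (π.injective h)⟩
  have himage : (univ : Finset (Equiv.Perm (Fin n))).image g = D := by
    apply Finset.Subset.antisymm
    · intro t ht
      obtain ⟨π, _, rfl⟩ := mem_image.mp ht
      exact hgD π
    · intro t ht
      rw [hD, mem_filter] at ht
      obtain ⟨σ, h1, h2, h3⟩ := exists_perm_three' huv huw hvw ht.2.1 ht.2.2.1 ht.2.2.2
      exact mem_image.mpr ⟨σ, mem_univ _, (hgt σ t).mpr ⟨h1, h2, h3⟩⟩
  set N := (univ.filter (fun π : Equiv.Perm (Fin n) => g π = (u, v, w))).card with hN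
  have hfiber : ∀ t ∈ D, (univ.filter (fun π : Equiv.Perm (Fin n) => g π = t)).card = N := by
    intro t ht
    rw [hD, mem_filter] at ht
    obtain ⟨σ, h1, h2, h3⟩ := exists_perm_three' huv huw hvw ht.2.1 ht.2.2.1 ht.2.2.2
    rw [hN]
    refine Finset.card_bij' (fun π _ => σ⁻¹ * π) (fun π _ => σ * π) ?_ ?_ ?_ ?_
    · intro π hπ
      rw [mem_filter] at hπ
      obtain ⟨hu', hv', hw'⟩ := (hgt π t).mp hπ.2
      refine mem_filter.mpr ⟨mem_univ _, (hgt _ _).mpr ?_⟩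
      refine ⟨?_, ?_, ?_⟩ <;>
        simp [Equiv.Perm.mul_apply, hu', hv', hw', ← h1, ← h2, ← h3]
    · intro π hπ
      rw [mem_filter] at hπ
      obtain ⟨hu', hv', hw'⟩ := (hgt π (u, v, w)).mp hπ.2
      refine mem_filter.mpr ⟨mem_univ _, (hgt _ _).mpr ?_⟩
      refine ⟨?_, ?_, ?_⟩ <;>
        simp [Equiv.Perm.mul_apply, hu', hv', hw', h1, h2, h3]
    · intro π _; simp [mul_assoc]
    · intro π _; simp [← mul_assoc]
  have hNne : N ≠ 0 := by
    refine Finset.card_ne_zero_of_mem (s := univ.filter _) (mem_filter.mpr ⟨mem_univ 1, ?_⟩)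
    simp [hg]
  have hcardfac : (Nat.factorial n : ℚ) = (D.card : ℚ) * (N : ℚ) := by
    have h0 : (univ : Finset (Equiv.Perm (Fin n))).card = D.card * N := by
      rw [Finset.card_eq_sum_card_fiberwise (fun π _ => hgD π),
        Finset.sum_congr rfl hfiber, sum_const, smul_eq_mul]
    have h1 : (univ : Finset (Equiv.Perm (Fin n))).card = Nat.factorial n := by
      rw [card_univ, Fintype.card_perm, Fintype.card_fin]
    rw [← h1, h0]; push_cast; ring
  have hsum : (∑ π : Equiv.Perm (Fin n), F (g π)) = (N : ℚ) * ∑ t ∈ D, F t := by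
    rw [Finset.sum_comp F g, himage,
      Finset.sum_congr rfl (fun t ht => by rw [hfiber t ht]), ← Finset.smul_sum,
      nsmul_eq_mul]
  have expand : ∀ H : Fin n → Fin n → Fin n → ℚ,
      (∑ t ∈ D, H t.1 t.2.1 t.2.2)
        = ∑ c : Fin n, ∑ a : Fin n, ∑ b : Fin n,
            (if a ≠ b ∧ a ≠ c ∧ b ≠ c then H a b c else 0) := by
    intro H
    rw [hD, sum_filter, Fintype.sum_prod_type]
    simp_rw [Fintype.sum_prod_type]
    calc (∑ a : Fin n, ∑ b : Fin n, ∑ c : Fin n,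
            if a ≠ b ∧ a ≠ c ∧ b ≠ c then H a b c else 0)
        = ∑ a : Fin n, ∑ c : Fin n, ∑ b : Fin n,
            (if a ≠ b ∧ a ≠ c ∧ b ≠ c then H a b c else 0) :=
          sum_congr rfl fun a _ => Finset.sum_comm
      _ = ∑ c : Fin n, ∑ a : Fin n, ∑ b : Fin n,
            (if a ≠ b ∧ a ≠ c ∧ b ≠ c then H a b c else 0) := Finset.sum_comm
  have hDcard : (D.card : ℚ) = (n:ℚ) * (((n:ℚ)-1) * ((n:ℚ)-2)) := by
    have h0 : (D.card : ℚ) = ∑ t ∈ D, (1:ℚ) := by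
      rw [sum_const, nsmul_eq_mul, mul_one]
    rw [h0, expand (fun _ _ _ => (1:ℚ)),
      Finset.sum_congr rfl (fun c _ => sum_ones c),
      sum_const, card_univ, Fintype.card_fin, nsmul_eq_mul]
  have hDsum : (∑ t ∈ D, F t)
      = (n:ℚ)*((n:ℚ)-1)*((n:ℚ)-2)*((n:ℚ)+1)*(7*(n:ℚ)+4)/60 := by
    have h0 : (∑ t ∈ D, F t) = ∑ c : Fin n, ∑ a : Fin n, ∑ b : Fin n,
        (if a ≠ b ∧ a ≠ c ∧ b ≠ c then
          |((a:ℕ):ℚ) - ((c:ℕ):ℚ)| * |((b:ℕ):ℚ) - ((c:ℕ):ℚ)| else 0) := by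
      rw [hF]
      exact expand (fun a b c : Fin n => |((a:ℕ):ℚ) - ((c:ℕ):ℚ)| * |((b:ℕ):ℚ) - ((c:ℕ):ℚ)|)
    rw [h0]
    have h1 : ∀ c : Fin n, (∑ a : Fin n, ∑ b : Fin n,
        if a ≠ b ∧ a ≠ c ∧ b ≠ c then
          |((a:ℕ):ℚ) - ((c:ℕ):ℚ)| * |((b:ℕ):ℚ) - ((c:ℕ):ℚ)| else 0)
        = (∑ a ∈ range n, |(a:ℚ) - ((c:ℕ):ℚ)|)^2
          - ∑ a ∈ range n, ((a:ℚ) - ((c:ℕ):ℚ))^2 := by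
      intro c
      rw [sum_pairs (fun a c => |((a:ℕ):ℚ) - ((c:ℕ):ℚ)|) (fun c => by simp) c]
      rw [Fin.sum_univ_eq_sum_range (fun a => |(a:ℚ) - ((c:ℕ):ℚ)|) n]
      congr 1
      simp_rw [sq_abs]
      exact Fin.sum_univ_eq_sum_range (fun a => ((a:ℚ) - ((c:ℕ):ℚ))^2) n
    rw [sum_congr rfl fun c _ => h1 c]
    rw [Fin.sum_univ_eq_sum_range (fun c => (∑ a ∈ range n, |(a:ℚ) - (c:ℚ)|)^2
      - ∑ a ∈ range n, ((a:ℚ) - (c:ℚ))^2) n]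
    exact keySum n
  have key : (∑ π : Equiv.Perm (Fin n),
        |((π u : ℕ) : ℚ) - ((π w : ℕ) : ℚ)| * |((π v : ℕ) : ℚ) - ((π w : ℕ) : ℚ)|)
      = ∑ π : Equiv.Perm (Fin n), F (g π) := by
    rw [hF, hg]
  rw [key, hsum, hcardfac, hDsum, hDcard]
  have h3 : (3:ℚ) ≤ (n:ℚ) := by exact_mod_cast hn
  have e1 : (n:ℚ) ≠ 0 := by linarith
  have e2 : (n:ℚ) - 1 ≠ 0 := by linarith
  have e3 : (n:ℚ) - 2 ≠ 0 := by linarith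
  have e4 : (N:ℚ) ≠ 0 := Nat.cast_ne_zero.mpr hNne
  field_simp
end

section
/- For a simple graph G with n vertices, m edges and degree sequence (k_i), the sum of edge lengths D in a uniformly random linear arrangement has expectation E[D] = m(n+1)/3. -/
open Finset

private lemma sum_id_q (n : ℕ) : ∑ i ∈ Finset.range n, (i : ℚ) = n * (n - 1) / 2 := by
  induction n with
  | zero => simp
  | succ k ih =>
    rw [Finset.sum_range_succ, ih]
    push_cast
    ring

private lemma T_range (n : ℕ) :
    ∑ a ∈ Finset.range n, ∑ b ∈ Finset.range n, |(a : ℚ) - (b : ℚ)|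
      = n * (n ^ 2 - 1) / 3 := by
  induction n with
  | zero => simp
  | succ k ih =>
    have habs : ∀ a ∈ Finset.range k, |(a : ℚ) - (k : ℚ)| = (k : ℚ) - a := by
      intro a ha
      rw [abs_sub_comm, abs_of_nonneg]
      have := Finset.mem_range.mp ha
      have : (a : ℚ) ≤ k := by exact_mod_cast this.le
      linarith
    simp only [Finset.sum_range_succ]
    rw [Finset.sum_add_distrib, ih]
    have h1 : ∑ a ∈ Finset.range k, |(a : ℚ) - (k : ℚ)|
        = ∑ a ∈ Finset.range k, ((k : ℚ) - a) := Finset.sum_congr rfl habs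
    have h2 : ∑ b ∈ Finset.range k, |(k : ℚ) - (b : ℚ)|
        = ∑ b ∈ Finset.range k, ((k : ℚ) - b) := by
      refine Finset.sum_congr rfl fun b hb => ?_
      rw [← abs_sub_comm]; exact habs b hb
    rw [h1, h2, Finset.sum_sub_distrib, Finset.sum_const, sum_id_q]
    simp only [sub_self, abs_zero, add_zero, Finset.card_range, nsmul_eq_mul]
    push_cast
    ring

private lemma T_fin (n : ℕ) :
    ∑ a : Fin n, ∑ b : Fin n, |((a : ℕ) : ℚ) - ((b : ℕ) : ℚ)|
      = n * (n ^ 2 - 1) / 3 := by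
  have h : ∀ a : ℕ, ∑ b : Fin n, |((a : ℕ) : ℚ) - ((b : ℕ) : ℚ)|
      = ∑ b ∈ Finset.range n, |(a : ℚ) - (b : ℚ)| :=
    fun a => Fin.sum_univ_eq_sum_range (fun b => |(a : ℚ) - (b : ℚ)|) n
  simp_rw [h]
  exact Fin.sum_univ_eq_sum_range (fun a => ∑ b ∈ Finset.range n, |(a : ℚ) - (b : ℚ)|) n
    |>.trans (T_range n)

private lemma perm_double (n : ℕ) (π : Equiv.Perm (Fin n)) :
    ∑ u : Fin n, ∑ v : Fin n, |((π u : ℕ) : ℚ) - ((π v : ℕ) : ℚ)|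
      = ∑ a : Fin n, ∑ b : Fin n, |((a : ℕ) : ℚ) - ((b : ℕ) : ℚ)| := by
  rw [← Equiv.sum_comp π (fun a => ∑ b : Fin n, |((a : ℕ) : ℚ) - ((b : ℕ) : ℚ)|)]
  refine Finset.sum_congr rfl fun u _ => ?_
  exact Equiv.sum_comp π (fun b => |((π u : ℕ) : ℚ) - ((b : ℕ) : ℚ)|)

private lemma exists_perm_pair {n : ℕ} {u v u' v' : Fin n} (h : u ≠ v) (h' : u' ≠ v') :
    ∃ τ : Equiv.Perm (Fin n), τ u' = u ∧ τ v' = v := by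
  classical
  set σ₁ := Equiv.swap u' u with hσ₁
  have hσ₁u : σ₁ u' = u := Equiv.swap_apply_left _ _
  set w := σ₁ v with hw
  have hσ₁w : σ₁ w = v := Equiv.swap_apply_self _ _ _
  have hu'w : u' ≠ w := fun hh => h (hσ₁u ▸ hh ▸ hσ₁w)
  refine ⟨(Equiv.swap v' w).trans σ₁, ?_, ?_⟩
  · show σ₁ ((Equiv.swap v' w) u') = u
    rw [Equiv.swap_apply_of_ne_of_ne h' hu'w]; exact hσ₁u
  · simp [Equiv.swap_apply_left, hσ₁w]

private lemma C_const {n : ℕ} {u v u' v' : Fin n} (h : u ≠ v) (h' : u' ≠ v') :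
    ∑ π : Equiv.Perm (Fin n), |((π u : ℕ) : ℚ) - ((π v : ℕ) : ℚ)|
      = ∑ π : Equiv.Perm (Fin n), |((π u' : ℕ) : ℚ) - ((π v' : ℕ) : ℚ)| := by
  obtain ⟨τ, hu, hv⟩ := exists_perm_pair h h'
  exact Fintype.sum_bijective (fun π => π * τ) (Group.mulRight_bijective τ) _ _
    (fun π => by simp [Equiv.Perm.mul_apply, hu, hv])

/-- For a simple graph `G` on `n ≥ 2` vertices with `m` edges, the sum of edge lengths
`D` in a uniformly random linear arrangement has expectation `E[D] = m(n+1)/3`.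
`D` is written as half the sum over ordered adjacent pairs of `|π u - π v|`. -/
theorem expected_sum_edge_lengths (n : ℕ) (hn : 2 ≤ n) (G : SimpleGraph (Fin n))
    [DecidableRel G.Adj] :
    (∑ π : Equiv.Perm (Fin n),
        (∑ u : Fin n, ∑ v : Fin n,
          if G.Adj u v then |((π u : ℕ) : ℚ) - ((π v : ℕ) : ℚ)| else 0) / 2)
      / (Nat.factorial n : ℚ)
      = (G.edgeFinset.card : ℚ) * ((n : ℚ) + 1) / 3 := by
  classical
  have hn0 : (n : ℚ) ≠ 0 := by
    have : 0 < n := by omega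
    exact_mod_cast this.ne'
  have hn1 : (n : ℚ) - 1 ≠ 0 := by
    have : (2 : ℚ) ≤ n := by exact_mod_cast hn
    intro hh; linarith
  have hfact : (Nat.factorial n : ℚ) ≠ 0 := by
    exact_mod_cast (Nat.factorial_pos n).ne'
  set i0 : Fin n := ⟨0, by omega⟩ with hi0
  set i1 : Fin n := ⟨1, by omega⟩ with hi1
  have h01 : i0 ≠ i1 := by simp [hi0, hi1, Fin.ext_iff]
  set C : ℚ := ∑ π : Equiv.Perm (Fin n), |((π i0 : ℕ) : ℚ) - ((π i1 : ℕ) : ℚ)| with hCdef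
  -- Step B : n! * T = n * (n-1) * C
  have hB : (Nat.factorial n : ℚ) * ((n : ℚ) * ((n : ℚ) ^ 2 - 1) / 3)
      = (n : ℚ) * ((n : ℚ) - 1) * C := by
    have lhs_eq : ∑ π : Equiv.Perm (Fin n), ∑ u : Fin n, ∑ v : Fin n,
        |((π u : ℕ) : ℚ) - ((π v : ℕ) : ℚ)|
        = (Nat.factorial n : ℚ) * ((n : ℚ) * ((n : ℚ) ^ 2 - 1) / 3) := by
      rw [Finset.sum_congr rfl (fun π _ => (perm_double n π).trans (T_fin n))]
      rw [Finset.sum_const, Finset.card_univ, Fintype.card_perm, Fintype.card_fin,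
        nsmul_eq_mul]
    have rhs_eq : ∑ π : Equiv.Perm (Fin n), ∑ u : Fin n, ∑ v : Fin n,
        |((π u : ℕ) : ℚ) - ((π v : ℕ) : ℚ)|
        = (n : ℚ) * ((n : ℚ) - 1) * C := by
      rw [Finset.sum_comm]
      have hrow : ∀ u : Fin n, ∑ π : Equiv.Perm (Fin n), ∑ v : Fin n,
          |((π u : ℕ) : ℚ) - ((π v : ℕ) : ℚ)|
          = ((n : ℚ) - 1) * C := by
        intro u
        rw [Finset.sum_comm]
        have hcell : ∀ v : Fin n, ∑ π : Equiv.Perm (Fin n),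
            |((π u : ℕ) : ℚ) - ((π v : ℕ) : ℚ)|
            = if u = v then 0 else C := by
          intro v
          by_cases huv : u = v
          · simp [huv]
          · rw [if_neg huv]; exact C_const huv h01
        rw [Finset.sum_congr rfl (fun v _ => hcell v)]
        have hsplit : ∀ v : Fin n, (if u = v then (0 : ℚ) else C)
            = C - (if u = v then C else 0) := fun v => by
          by_cases h : u = v <;> simp [h]
        rw [Finset.sum_congr rfl (fun v _ => hsplit v), Finset.sum_sub_distrib,
          Finset.sum_const, Finset.sum_ite_eq Finset.univ u (fun _ => C),
          if_pos (Finset.mem_univ u), Finset.card_univ, Fintype.card_fin, nsmul_eq_mul]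
        ring
      rw [Finset.sum_congr rfl (fun u _ => hrow u), Finset.sum_const, Finset.card_univ,
        Fintype.card_fin, nsmul_eq_mul]
      ring
    rw [← lhs_eq, rhs_eq]
  have hC : C = (Nat.factorial n : ℚ) * ((n : ℚ) + 1) / 3 := by
    apply mul_left_cancel₀ (mul_ne_zero hn0 hn1)
    rw [← hB]; ring
  -- Step A : total sum equals C * 2m
  have hA : ∑ π : Equiv.Perm (Fin n),
      (∑ u : Fin n, ∑ v : Fin n,
        if G.Adj u v then |((π u : ℕ) : ℚ) - ((π v : ℕ) : ℚ)| else 0)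
      = C * (2 * (G.edgeFinset.card : ℚ)) := by
    rw [Finset.sum_comm]
    have hrow : ∀ u : Fin n, ∑ π : Equiv.Perm (Fin n), ∑ v : Fin n,
        (if G.Adj u v then |((π u : ℕ) : ℚ) - ((π v : ℕ) : ℚ)| else 0)
        = ∑ v : Fin n, (if G.Adj u v then C else 0) := by
      intro u
      rw [Finset.sum_comm]
      refine Finset.sum_congr rfl fun v _ => ?_
      by_cases h : G.Adj u v
      · simp only [if_pos h]
        exact C_const (G.ne_of_adj h) h01
      · simp [h]
    rw [Finset.sum_congr rfl (fun u _ => hrow u)]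
    have hone : ∀ u v : Fin n, (if G.Adj u v then C else 0)
        = C * (if G.Adj u v then (1 : ℚ) else 0) := fun u v => by
      by_cases h : G.Adj u v <;> simp [h]
    simp_rw [hone, ← Finset.mul_sum]
    congr 1
    have hdeg : ∀ u : Fin n, ∑ v : Fin n, (if G.Adj u v then (1 : ℚ) else 0)
        = (G.degree u : ℚ) := by
      intro u
      rw [Finset.sum_boole]
      congr 2
      ext v
      simp [SimpleGraph.mem_neighborFinset]
    rw [Finset.sum_congr rfl (fun u _ => hdeg u)]
    have := G.sum_degrees_eq_twice_card_edges
    exact_mod_cast this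
  have hsum : ∑ π : Equiv.Perm (Fin n),
      (∑ u : Fin n, ∑ v : Fin n,
        if G.Adj u v then |((π u : ℕ) : ℚ) - ((π v : ℕ) : ℚ)| else 0) / 2
      = C * (G.edgeFinset.card : ℚ) := by
    rw [← Finset.sum_div, hA]; ring
  rw [hsum, hC]
  field_simp
end

section
/- For a simple graph G with n vertices, m edges and degree sequence (k_i), the second moment of the sum of edge lengths D in a uniformly random linear arrangement is E[D^2] = ((n+1)/45)[m(m(5n+4) + 2(n-1)) + (n/4 - 1) Σ_i k_i^2]. -/
namespace SecondMomentAux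

open Finset Function Equiv

variable {n : ℕ}

lemma exists_perm_map {k : ℕ} (a x : Fin k → Fin n) (ha : Injective a) (hx : Injective x) :
    ∃ σ : Equiv.Perm (Fin n), ∀ i, σ (a i) = x i := by
  classical
  let e : {v // v ∈ Set.range a} ≃ {v // v ∈ Set.range x} :=
    (Equiv.ofInjective a ha).symm.trans (Equiv.ofInjective x hx)
  refine ⟨e.extendSubtype, fun i => ?_⟩
  rw [Equiv.extendSubtype_apply_of_mem e (a i) ⟨i, rfl⟩]
  show ((Equiv.ofInjective x hx) ((Equiv.ofInjective a ha).symm ⟨a i, ⟨i, rfl⟩⟩) : Fin n) = x i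
  rw [show (⟨a i, ⟨i, rfl⟩⟩ : {v // v ∈ Set.range a}) = Equiv.ofInjective a ha i from rfl]
  simp

lemma card_fix {k : ℕ} (a : Fin k → Fin n) (ha : Injective a) :
    (Finset.univ.filter fun π : Equiv.Perm (Fin n) => ∀ i, π (a i) = a i).card
      = Nat.factorial (n - k) := by
  classical
  set s : Finset (Fin n) := Finset.univ.image a with hs
  have hcard : s.card = k := by
    rw [hs, Finset.card_image_of_injective _ ha, Finset.card_univ, Fintype.card_fin]
  rw [← Fintype.card_subtype]
  have e1 : {π : Equiv.Perm (Fin n) // ∀ i, π (a i) = a i}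
      ≃ {π : Equiv.Perm (Fin n) // ∀ v, ¬(v ∉ s) → π v = v} := by
    apply Equiv.subtypeEquivRight
    intro π
    constructor
    · intro h v hv
      rw [not_not] at hv
      obtain ⟨i, -, rfl⟩ := Finset.mem_image.mp hv
      exact h i
    · intro h i
      exact h (a i) (not_not_intro (Finset.mem_image_of_mem a (Finset.mem_univ i)))
  have e2 : {π : Equiv.Perm (Fin n) // ∀ v, ¬(v ∉ s) → π v = v}
      ≃ Equiv.Perm {v : Fin n // v ∉ s} :=
    (Equiv.Perm.subtypeEquivSubtypePerm (fun v => v ∉ s)).symm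
  rw [Fintype.card_congr (e1.trans e2), Fintype.card_perm]
  congr 1
  rw [Fintype.card_subtype_compl]
  simp [hcard]

lemma card_agree {k : ℕ} (a x : Fin k → Fin n) (ha : Injective a) (hx : Injective x) :
    (Finset.univ.filter fun π : Equiv.Perm (Fin n) => ∀ i, π (a i) = x i).card
      = Nat.factorial (n - k) := by
  classical
  obtain ⟨σ, hσ⟩ := exists_perm_map a x ha hx
  rw [← card_fix a ha]
  apply Finset.card_bij' (fun π _ => σ⁻¹ * π) (fun π _ => σ * π)
  · intro π hπ
    simp only [Finset.mem_filter, Finset.mem_univ, true_and] at hπ ⊢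
    intro i
    simp [hπ i, ← hσ i]
  · intro π hπ
    simp only [Finset.mem_filter, Finset.mem_univ, true_and] at hπ ⊢
    intro i
    simp [hπ i, hσ i]
  · intro π _; simp [mul_assoc]
  · intro π _; simp [mul_assoc]

lemma sum_perm_comp {k : ℕ} (a : Fin k → Fin n) (ha : Injective a)
    (F : (Fin k → Fin n) → ℚ) :
    ∑ π : Equiv.Perm (Fin n), F (fun i => π (a i))
      = (Nat.factorial (n - k) : ℚ) *
          ∑ x : Fin k → Fin n, if Injective x then F x else 0 := by
  classical
  have step1 : ∀ π : Equiv.Perm (Fin n),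
      F (fun i => π (a i)) = ∑ x : Fin k → Fin n,
        if x = (fun i => π (a i)) then F x else 0 := by
    intro π
    rw [Finset.sum_ite_eq' Finset.univ (fun i => π (a i)) F]
    simp
  calc ∑ π : Equiv.Perm (Fin n), F (fun i => π (a i))
      = ∑ π : Equiv.Perm (Fin n), ∑ x : Fin k → Fin n,
          if x = (fun i => π (a i)) then F x else 0 := by
        exact Finset.sum_congr rfl fun π _ => step1 π
    _ = ∑ x : Fin k → Fin n, ∑ π : Equiv.Perm (Fin n),
          if x = (fun i => π (a i)) then F x else 0 := Finset.sum_comm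
    _ = ∑ x : Fin k → Fin n,
          ((Finset.univ.filter fun π : Equiv.Perm (Fin n) => ∀ i, π (a i) = x i).card : ℚ)
            * F x := by
        refine Finset.sum_congr rfl fun x _ => ?_
        rw [← Finset.sum_filter]
        rw [Finset.sum_const, nsmul_eq_mul]
        have hfe : (Finset.univ.filter fun π : Equiv.Perm (Fin n) => x = fun i => π (a i))
            = Finset.univ.filter fun π : Equiv.Perm (Fin n) => ∀ i, π (a i) = x i := by
          ext π
          simp only [Finset.mem_filter, Finset.mem_univ, true_and, funext_iff]
          exact ⟨fun h i => (h i).symm, fun h i => (h i).symm⟩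
        rw [hfe]
    _ = ∑ x : Fin k → Fin n, if Injective x then (Nat.factorial (n-k) : ℚ) * F x else 0 := by
        refine Finset.sum_congr rfl fun x _ => ?_
        by_cases hx : Injective x
        · rw [if_pos hx, card_agree a x ha hx]
        · rw [if_neg hx]
          convert zero_mul (F x)
          norm_cast
          rw [Finset.card_eq_zero, Finset.filter_eq_empty_iff]
          intro π _ h
          exact hx (by
            have : x = fun i => π (a i) := funext fun i => (h i).symm
            rw [this]; exact π.injective.comp ha)
    _ = _ := by
        rw [Finset.mul_sum]
        refine Finset.sum_congr rfl fun x _ => ?_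
        by_cases hx : Injective x <;> simp [hx]


-- master polynomial sum
lemma sum_poly4 (c4 c3 c2 c1 c0 : ℚ) (n : ℕ) :
    ∑ x ∈ Finset.range n, (c4*(x:ℚ)^4 + c3*(x:ℚ)^3 + c2*(x:ℚ)^2 + c1*(x:ℚ) + c0)
      = c4*((n:ℚ)^5/5 - (n:ℚ)^4/2 + (n:ℚ)^3/3 - (n:ℚ)/30)
        + c3*((n:ℚ)^4/4 - (n:ℚ)^3/2 + (n:ℚ)^2/4)
        + c2*((n:ℚ)^3/3 - (n:ℚ)^2/2 + (n:ℚ)/6)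
        + c1*((n:ℚ)^2/2 - (n:ℚ)/2) + c0*(n:ℚ) := by
  induction n with
  | zero => norm_num
  | succ k ih => rw [Finset.sum_range_succ, ih]; push_cast; ring

lemma abs_lemma_ge : ∀ (m x : ℕ), m ≤ x →
    ∑ y ∈ Finset.range m, |(x:ℚ) - (y:ℚ)| = (m:ℚ)*(x:ℚ) - (m:ℚ)*((m:ℚ)-1)/2 := by
  intro m
  induction m with
  | zero => intro x _; simp
  | succ k ih =>
    intro x hx
    rw [Finset.sum_range_succ, ih x (Nat.le_of_succ_le hx)]
    have h1 : (k:ℚ) ≤ (x:ℚ) := by exact_mod_cast Nat.le_of_succ_le hx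
    rw [abs_of_nonneg (by linarith)]
    push_cast
    ring

lemma abs_lemma_lt : ∀ (m x : ℕ), x < m →
    ∑ y ∈ Finset.range m, |(x:ℚ) - (y:ℚ)|
      = (x:ℚ)^2 - ((m:ℚ)-1)*(x:ℚ) + (m:ℚ)*((m:ℚ)-1)/2 := by
  intro m
  induction m with
  | zero => intro x hx; omega
  | succ k ih =>
    intro x hx
    rw [Finset.sum_range_succ]
    rcases Nat.lt_or_ge x k with h | h
    · rw [ih x h]
      have h1 : (x:ℚ) ≤ (k:ℚ) := by exact_mod_cast Nat.le_of_lt h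
      rw [abs_of_nonpos (by linarith)]
      push_cast
      ring
    · have hxk : x = k := by omega
      subst hxk
      rw [abs_lemma_ge x x le_rfl]
      simp only [sub_self, abs_zero]
      push_cast
      ring

-- closed forms over range
lemma sum_T2 (n : ℕ) :
    ∑ x ∈ Finset.range n, ∑ y ∈ Finset.range n, ((x:ℚ) - (y:ℚ))^2
      = ((n:ℚ)^4 - (n:ℚ)^2)/6 := by
  have inner : ∀ x : ℕ, ∑ y ∈ Finset.range n, ((x:ℚ) - (y:ℚ))^2
      = (n:ℚ)*(x:ℚ)^2 - 2*(x:ℚ)*((n:ℚ)^2/2 - (n:ℚ)/2) + ((n:ℚ)^3/3 - (n:ℚ)^2/2 + (n:ℚ)/6) := by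
    intro x
    have := sum_poly4 0 0 1 (-2*(x:ℚ)) ((x:ℚ)^2) n
    calc ∑ y ∈ Finset.range n, ((x:ℚ) - (y:ℚ))^2
        = ∑ y ∈ Finset.range n, (0*(y:ℚ)^4 + 0*(y:ℚ)^3 + 1*(y:ℚ)^2 + (-2*(x:ℚ))*(y:ℚ) + (x:ℚ)^2) := by
          refine Finset.sum_congr rfl fun y _ => by ring
      _ = _ := by rw [this]; ring
  calc ∑ x ∈ Finset.range n, ∑ y ∈ Finset.range n, ((x:ℚ) - (y:ℚ))^2
      = ∑ x ∈ Finset.range n, (0*(x:ℚ)^4 + 0*(x:ℚ)^3 + (n:ℚ)*(x:ℚ)^2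
          + (-((n:ℚ)^2) + (n:ℚ))*(x:ℚ) + ((n:ℚ)^3/3 - (n:ℚ)^2/2 + (n:ℚ)/6)) := by
        refine Finset.sum_congr rfl fun x _ => ?_
        rw [inner x]; ring
    _ = _ := by rw [sum_poly4]; ring

lemma sum_B (n : ℕ) :
    ∑ x ∈ Finset.range n, ∑ y ∈ Finset.range n, |(x:ℚ) - (y:ℚ)|
      = ((n:ℚ)^3 - (n:ℚ))/3 := by
  calc ∑ x ∈ Finset.range n, ∑ y ∈ Finset.range n, |(x:ℚ) - (y:ℚ)|
      = ∑ x ∈ Finset.range n, (0*(x:ℚ)^4 + 0*(x:ℚ)^3 + 1*(x:ℚ)^2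
          + (-((n:ℚ)-1))*(x:ℚ) + (n:ℚ)*((n:ℚ)-1)/2) := by
        refine Finset.sum_congr rfl fun x hx => ?_
        rw [abs_lemma_lt n x (Finset.mem_range.mp hx)]; ring
    _ = _ := by rw [sum_poly4]; ring

lemma sum_T3 (n : ℕ) :
    ∑ x ∈ Finset.range n, (∑ y ∈ Finset.range n, |(x:ℚ) - (y:ℚ)|)^2
      = 7*(n:ℚ)^5/60 - (n:ℚ)^3/4 + 2*(n:ℚ)/15 := by
  calc ∑ x ∈ Finset.range n, (∑ y ∈ Finset.range n, |(x:ℚ) - (y:ℚ)|)^2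
      = ∑ x ∈ Finset.range n, (1*(x:ℚ)^4 + (-2*((n:ℚ)-1))*(x:ℚ)^3
          + (((n:ℚ)-1)^2 + (n:ℚ)*((n:ℚ)-1))*(x:ℚ)^2
          + (-((n:ℚ)-1)*((n:ℚ)*((n:ℚ)-1)))*(x:ℚ)
          + ((n:ℚ)*((n:ℚ)-1)/2)^2) := by
        refine Finset.sum_congr rfl fun x hx => ?_
        rw [abs_lemma_lt n x (Finset.mem_range.mp hx)]; ring
    _ = _ := by rw [sum_poly4]; ring


lemma sum_fun_succ {k : ℕ} (g : (Fin (k+1) → Fin n) → ℚ) :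
    ∑ x : Fin (k+1) → Fin n, g x = ∑ a : Fin n, ∑ y : Fin k → Fin n, g (Fin.cons a y) := by
  calc ∑ x : Fin (k+1) → Fin n, g x
      = ∑ p : Fin n × (Fin k → Fin n), g (Fin.cons p.1 p.2) :=
        (Fintype.sum_equiv (Fin.consEquiv fun _ => Fin n)
          (fun p => g (Fin.cons p.1 p.2)) g (fun p => rfl)).symm
    _ = _ := Fintype.sum_prod_type _

lemma sum_fun_zero (g : (Fin 0 → Fin n) → ℚ) :
    ∑ x : Fin 0 → Fin n, g x = g ![] := by
  rw [Fintype.sum_unique]  -- maybe needs Unique instance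
  congr 1

lemma sum_fun2 (g : (Fin 2 → Fin n) → ℚ) :
    ∑ x : Fin 2 → Fin n, g x = ∑ a : Fin n, ∑ b : Fin n, g ![a, b] := by
  rw [sum_fun_succ]
  refine Finset.sum_congr rfl fun a _ => ?_
  rw [sum_fun_succ]
  refine Finset.sum_congr rfl fun b _ => ?_
  rw [sum_fun_zero fun y => g (Fin.cons a (Fin.cons b y))]
  rfl

lemma sum_fun3 (g : (Fin 3 → Fin n) → ℚ) :
    ∑ x : Fin 3 → Fin n, g x = ∑ a : Fin n, ∑ b : Fin n, ∑ c : Fin n, g ![a, b, c] := by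
  rw [sum_fun_succ]
  refine Finset.sum_congr rfl fun a _ => ?_
  rw [sum_fun2 fun y => g (Fin.cons a y)]
  rfl

lemma sum_fun4 (g : (Fin 4 → Fin n) → ℚ) :
    ∑ x : Fin 4 → Fin n, g x
      = ∑ a : Fin n, ∑ b : Fin n, ∑ c : Fin n, ∑ d : Fin n, g ![a, b, c, d] := by
  rw [sum_fun_succ]
  refine Finset.sum_congr rfl fun a _ => ?_
  rw [sum_fun3 fun y => g (Fin.cons a y)]
  rfl

lemma inj2_iff (a b : Fin n) : Injective ![a, b] ↔ a ≠ b := by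
  constructor
  · intro h e
    exact absurd (h (a₁ := 0) (a₂ := 1) (by simp [e])) (by decide)
  · intro h i j hij
    fin_cases i <;> fin_cases j <;> simp_all

lemma inj3_iff (a b c : Fin n) :
    Injective ![a, b, c] ↔ a ≠ b ∧ a ≠ c ∧ b ≠ c := by
  constructor
  · intro h
    refine ⟨fun e => ?_, fun e => ?_, fun e => ?_⟩
    · exact absurd (h (a₁ := 0) (a₂ := 1) (by simp [e])) (by decide)
    · exact absurd (h (a₁ := 0) (a₂ := 2) (by simp [e])) (by decide)
    · exact absurd (h (a₁ := 1) (a₂ := 2) (by simp [e])) (by decide)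
  · rintro ⟨h1, h2, h3⟩ i j hij
    fin_cases i <;> fin_cases j <;> simp_all

lemma inj4_iff (a b c d : Fin n) :
    Injective ![a, b, c, d] ↔ a ≠ b ∧ a ≠ c ∧ a ≠ d ∧ b ≠ c ∧ b ≠ d ∧ c ≠ d := by
  constructor
  · intro h
    refine ⟨fun e => ?_, fun e => ?_, fun e => ?_, fun e => ?_, fun e => ?_, fun e => ?_⟩
    · exact absurd (h (a₁ := 0) (a₂ := 1) (by simp [e])) (by decide)
    · exact absurd (h (a₁ := 0) (a₂ := 2) (by simp [e])) (by decide)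
    · exact absurd (h (a₁ := 0) (a₂ := 3) (by simp [e])) (by decide)
    · exact absurd (h (a₁ := 1) (a₂ := 2) (by simp [e])) (by decide)
    · exact absurd (h (a₁ := 1) (a₂ := 3) (by simp [e])) (by decide)
    · exact absurd (h (a₁ := 2) (a₂ := 3) (by simp [e])) (by decide)
  · rintro ⟨h1, h2, h3, h4, h5, h6⟩ i j hij
    fin_cases i <;> fin_cases j <;> simp_all


lemma finsum_abs (x : Fin n) :
    ∑ y : Fin n, |((x:ℕ):ℚ) - ((y:ℕ):ℚ)| = ∑ j ∈ Finset.range n, |((x:ℕ):ℚ) - (j:ℚ)| :=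
  Fin.sum_univ_eq_sum_range (fun j => |((x:ℕ):ℚ) - (j:ℚ)|) n

lemma VL2 (n : ℕ) :
    ∑ x : Fin n, ∑ y : Fin n,
        (if x ≠ y then |((x:ℕ):ℚ) - ((y:ℕ):ℚ)| * |((x:ℕ):ℚ) - ((y:ℕ):ℚ)| else 0)
      = ((n:ℚ)^4 - (n:ℚ)^2)/6 := by
  have h1 : ∀ x y : Fin n,
      (if x ≠ y then |((x:ℕ):ℚ) - ((y:ℕ):ℚ)| * |((x:ℕ):ℚ) - ((y:ℕ):ℚ)| else 0)
        = (((x:ℕ):ℚ) - ((y:ℕ):ℚ))^2 := by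
    intro x y
    by_cases h : x = y
    · subst h; simp
    · rw [if_pos h, abs_mul_abs_self]; ring
  calc ∑ x : Fin n, ∑ y : Fin n,
        (if x ≠ y then |((x:ℕ):ℚ) - ((y:ℕ):ℚ)| * |((x:ℕ):ℚ) - ((y:ℕ):ℚ)| else 0)
      = ∑ x : Fin n, ∑ y : Fin n, (((x:ℕ):ℚ) - ((y:ℕ):ℚ))^2 :=
        Finset.sum_congr rfl fun x _ => Finset.sum_congr rfl fun y _ => h1 x y
    _ = ∑ i ∈ Finset.range n, ∑ j ∈ Finset.range n, ((i:ℚ) - (j:ℚ))^2 := by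
        rw [← Fin.sum_univ_eq_sum_range (fun i => ∑ j ∈ Finset.range n, ((i:ℚ) - (j:ℚ))^2) n]
        exact Finset.sum_congr rfl fun x _ =>
          (Fin.sum_univ_eq_sum_range (fun j => (((x:ℕ):ℚ) - (j:ℚ))^2) n)
    _ = _ := sum_T2 n

lemma VL2' (n : ℕ) :
    ∑ x : Fin n, ∑ y : Fin n, |((x:ℕ):ℚ) - ((y:ℕ):ℚ)| * |((x:ℕ):ℚ) - ((y:ℕ):ℚ)|
      = ((n:ℚ)^4 - (n:ℚ)^2)/6 := by
  rw [← VL2 n]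
  refine Finset.sum_congr rfl fun x _ => Finset.sum_congr rfl fun y _ => ?_
  by_cases h : x = y
  · subst h; simp
  · rw [if_pos h]

lemma VLB (n : ℕ) :
    ∑ x : Fin n, ∑ y : Fin n, |((x:ℕ):ℚ) - ((y:ℕ):ℚ)| = ((n:ℚ)^3 - (n:ℚ))/3 := by
  rw [← sum_B n, ← Fin.sum_univ_eq_sum_range
    (fun i => ∑ j ∈ Finset.range n, |(i:ℚ) - (j:ℚ)|) n]
  exact Finset.sum_congr rfl fun x _ => finsum_abs x

lemma VLA2 (n : ℕ) :
    ∑ x : Fin n, (∑ y : Fin n, |((x:ℕ):ℚ) - ((y:ℕ):ℚ)|)^2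
      = 7*(n:ℚ)^5/60 - (n:ℚ)^3/4 + 2*(n:ℚ)/15 := by
  rw [← sum_T3 n, ← Fin.sum_univ_eq_sum_range
    (fun i => (∑ j ∈ Finset.range n, |(i:ℚ) - (j:ℚ)|)^2) n]
  exact Finset.sum_congr rfl fun x _ => by rw [finsum_abs x]

lemma VL3 (n : ℕ) :
    ∑ x : Fin n, ∑ y : Fin n, ∑ z : Fin n,
        (if x ≠ y ∧ x ≠ z ∧ y ≠ z then |((x:ℕ):ℚ) - ((y:ℕ):ℚ)| * |((x:ℕ):ℚ) - ((z:ℕ):ℚ)| else 0)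
      = (7*(n:ℚ)^5/60 - (n:ℚ)^3/4 + 2*(n:ℚ)/15) - ((n:ℚ)^4 - (n:ℚ)^2)/6 := by
  have h1 : ∀ x y z : Fin n,
      (if x ≠ y ∧ x ≠ z ∧ y ≠ z then |((x:ℕ):ℚ) - ((y:ℕ):ℚ)| * |((x:ℕ):ℚ) - ((z:ℕ):ℚ)| else 0)
        = |((x:ℕ):ℚ) - ((y:ℕ):ℚ)| * |((x:ℕ):ℚ) - ((z:ℕ):ℚ)|
          - (if y = z then |((x:ℕ):ℚ) - ((y:ℕ):ℚ)| * |((x:ℕ):ℚ) - ((z:ℕ):ℚ)| else 0) := by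
    intro x y z
    by_cases hyz : y = z
    · subst hyz; simp
    · by_cases hxy : x = y
      · subst hxy; simp [hyz]
      · by_cases hxz : x = z
        · subst hxz; simp [hyz, hxy]
        · simp [hxy, hxz, hyz]
  calc ∑ x : Fin n, ∑ y : Fin n, ∑ z : Fin n,
        (if x ≠ y ∧ x ≠ z ∧ y ≠ z then |((x:ℕ):ℚ) - ((y:ℕ):ℚ)| * |((x:ℕ):ℚ) - ((z:ℕ):ℚ)| else 0)
      = ∑ x : Fin n, ∑ y : Fin n, ∑ z : Fin n,
          (|((x:ℕ):ℚ) - ((y:ℕ):ℚ)| * |((x:ℕ):ℚ) - ((z:ℕ):ℚ)|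
            - (if y = z then |((x:ℕ):ℚ) - ((y:ℕ):ℚ)| * |((x:ℕ):ℚ) - ((z:ℕ):ℚ)| else 0)) :=
        Finset.sum_congr rfl fun x _ => Finset.sum_congr rfl fun y _ =>
          Finset.sum_congr rfl fun z _ => h1 x y z
    _ = (∑ x : Fin n, ∑ y : Fin n, ∑ z : Fin n,
            |((x:ℕ):ℚ) - ((y:ℕ):ℚ)| * |((x:ℕ):ℚ) - ((z:ℕ):ℚ)|)
        - ∑ x : Fin n, ∑ y : Fin n, ∑ z : Fin n,
            (if y = z then |((x:ℕ):ℚ) - ((y:ℕ):ℚ)| * |((x:ℕ):ℚ) - ((z:ℕ):ℚ)| else 0) := by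
        simp [Finset.sum_sub_distrib]
    _ = (∑ x : Fin n, (∑ y : Fin n, |((x:ℕ):ℚ) - ((y:ℕ):ℚ)|)^2)
        - ∑ x : Fin n, ∑ y : Fin n, |((x:ℕ):ℚ) - ((y:ℕ):ℚ)| * |((x:ℕ):ℚ) - ((y:ℕ):ℚ)| := by
        congr 1
        · refine Finset.sum_congr rfl fun x _ => ?_
          rw [sq, Finset.sum_mul_sum]
        · refine Finset.sum_congr rfl fun x _ => Finset.sum_congr rfl fun y _ => ?_
          rw [Finset.sum_ite_eq Finset.univ y
            (fun z => |((x:ℕ):ℚ) - ((y:ℕ):ℚ)| * |((x:ℕ):ℚ) - ((z:ℕ):ℚ)|)]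
          simp
    _ = _ := by rw [VLA2 n, VL2' n]


lemma VLfull4 (n : ℕ) :
    ∑ x : Fin n, ∑ y : Fin n, ∑ z : Fin n, ∑ w : Fin n,
        |((x:ℕ):ℚ) - ((y:ℕ):ℚ)| * |((z:ℕ):ℚ) - ((w:ℕ):ℚ)|
      = (((n:ℚ)^3 - (n:ℚ))/3)^2 := by
  have step : ∀ x y : Fin n, ∑ z : Fin n, ∑ w : Fin n,
      |((x:ℕ):ℚ) - ((y:ℕ):ℚ)| * |((z:ℕ):ℚ) - ((w:ℕ):ℚ)|
      = |((x:ℕ):ℚ) - ((y:ℕ):ℚ)| * (((n:ℚ)^3 - (n:ℚ))/3) := by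
    intro x y
    rw [← VLB n, Finset.mul_sum]
    exact Finset.sum_congr rfl fun z _ => by rw [Finset.mul_sum]
  calc ∑ x : Fin n, ∑ y : Fin n, ∑ z : Fin n, ∑ w : Fin n,
        |((x:ℕ):ℚ) - ((y:ℕ):ℚ)| * |((z:ℕ):ℚ) - ((w:ℕ):ℚ)|
      = ∑ x : Fin n, ∑ y : Fin n, |((x:ℕ):ℚ) - ((y:ℕ):ℚ)| * (((n:ℚ)^3 - (n:ℚ))/3) :=
        Finset.sum_congr rfl fun x _ => Finset.sum_congr rfl fun y _ => step x y
    _ = (∑ x : Fin n, ∑ y : Fin n, |((x:ℕ):ℚ) - ((y:ℕ):ℚ)|) * (((n:ℚ)^3 - (n:ℚ))/3) := by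
        rw [Finset.sum_mul]
        exact Finset.sum_congr rfl fun x _ => by rw [Finset.sum_mul]
    _ = _ := by rw [VLB n]; ring

-- collapse x = z
lemma VLc1 (n : ℕ) :
    ∑ x : Fin n, ∑ y : Fin n, ∑ z : Fin n, ∑ w : Fin n,
        (if x = z then |((x:ℕ):ℚ) - ((y:ℕ):ℚ)| * |((z:ℕ):ℚ) - ((w:ℕ):ℚ)| else 0)
      = 7*(n:ℚ)^5/60 - (n:ℚ)^3/4 + 2*(n:ℚ)/15 := by
  have coll : ∀ x y : Fin n, ∑ z : Fin n, ∑ w : Fin n,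
      (if x = z then |((x:ℕ):ℚ) - ((y:ℕ):ℚ)| * |((z:ℕ):ℚ) - ((w:ℕ):ℚ)| else 0)
      = ∑ w : Fin n, |((x:ℕ):ℚ) - ((y:ℕ):ℚ)| * |((x:ℕ):ℚ) - ((w:ℕ):ℚ)| := by
    intro x y
    have : ∀ z : Fin n, ∑ w : Fin n,
        (if x = z then |((x:ℕ):ℚ) - ((y:ℕ):ℚ)| * |((z:ℕ):ℚ) - ((w:ℕ):ℚ)| else 0)
        = (if x = z then ∑ w : Fin n, |((x:ℕ):ℚ) - ((y:ℕ):ℚ)| * |((z:ℕ):ℚ) - ((w:ℕ):ℚ)| else 0) := by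
      intro z
      by_cases h : x = z <;> simp [h]
    rw [Finset.sum_congr rfl fun z _ => this z,
      Finset.sum_ite_eq Finset.univ x
        (fun z => ∑ w : Fin n, |((x:ℕ):ℚ) - ((y:ℕ):ℚ)| * |((z:ℕ):ℚ) - ((w:ℕ):ℚ)|)]
    simp
  calc ∑ x : Fin n, ∑ y : Fin n, ∑ z : Fin n, ∑ w : Fin n,
        (if x = z then |((x:ℕ):ℚ) - ((y:ℕ):ℚ)| * |((z:ℕ):ℚ) - ((w:ℕ):ℚ)| else 0)
      = ∑ x : Fin n, ∑ y : Fin n, ∑ w : Fin n,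
          |((x:ℕ):ℚ) - ((y:ℕ):ℚ)| * |((x:ℕ):ℚ) - ((w:ℕ):ℚ)| :=
        Finset.sum_congr rfl fun x _ => Finset.sum_congr rfl fun y _ => coll x y
    _ = ∑ x : Fin n, (∑ y : Fin n, |((x:ℕ):ℚ) - ((y:ℕ):ℚ)|)^2 := by
        refine Finset.sum_congr rfl fun x _ => ?_
        rw [sq, Finset.sum_mul_sum]
    _ = _ := VLA2 n


-- x = w
lemma VLc2 (n : ℕ) :
    ∑ x : Fin n, ∑ y : Fin n, ∑ z : Fin n, ∑ w : Fin n,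
        (if x = w then |((x:ℕ):ℚ) - ((y:ℕ):ℚ)| * |((z:ℕ):ℚ) - ((w:ℕ):ℚ)| else 0)
      = 7*(n:ℚ)^5/60 - (n:ℚ)^3/4 + 2*(n:ℚ)/15 := by
  have coll : ∀ x y z : Fin n, ∑ w : Fin n,
      (if x = w then |((x:ℕ):ℚ) - ((y:ℕ):ℚ)| * |((z:ℕ):ℚ) - ((w:ℕ):ℚ)| else 0)
      = |((x:ℕ):ℚ) - ((y:ℕ):ℚ)| * |((x:ℕ):ℚ) - ((z:ℕ):ℚ)| := by
    intro x y z
    rw [Finset.sum_ite_eq Finset.univ x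
      (fun w => |((x:ℕ):ℚ) - ((y:ℕ):ℚ)| * |((z:ℕ):ℚ) - ((w:ℕ):ℚ)|)]
    simp [abs_sub_comm]
  calc ∑ x : Fin n, ∑ y : Fin n, ∑ z : Fin n, ∑ w : Fin n,
        (if x = w then |((x:ℕ):ℚ) - ((y:ℕ):ℚ)| * |((z:ℕ):ℚ) - ((w:ℕ):ℚ)| else 0)
      = ∑ x : Fin n, ∑ y : Fin n, ∑ z : Fin n,
          |((x:ℕ):ℚ) - ((y:ℕ):ℚ)| * |((x:ℕ):ℚ) - ((z:ℕ):ℚ)| :=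
        Finset.sum_congr rfl fun x _ => Finset.sum_congr rfl fun y _ =>
          Finset.sum_congr rfl fun z _ => coll x y z
    _ = ∑ x : Fin n, (∑ y : Fin n, |((x:ℕ):ℚ) - ((y:ℕ):ℚ)|)^2 := by
        refine Finset.sum_congr rfl fun x _ => ?_
        rw [sq, Finset.sum_mul_sum]
    _ = _ := VLA2 n

-- y = z
lemma VLc3 (n : ℕ) :
    ∑ x : Fin n, ∑ y : Fin n, ∑ z : Fin n, ∑ w : Fin n,
        (if y = z then |((x:ℕ):ℚ) - ((y:ℕ):ℚ)| * |((z:ℕ):ℚ) - ((w:ℕ):ℚ)| else 0)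
      = 7*(n:ℚ)^5/60 - (n:ℚ)^3/4 + 2*(n:ℚ)/15 := by
  have coll : ∀ x y : Fin n, ∑ z : Fin n, ∑ w : Fin n,
      (if y = z then |((x:ℕ):ℚ) - ((y:ℕ):ℚ)| * |((z:ℕ):ℚ) - ((w:ℕ):ℚ)| else 0)
      = ∑ w : Fin n, |((y:ℕ):ℚ) - ((x:ℕ):ℚ)| * |((y:ℕ):ℚ) - ((w:ℕ):ℚ)| := by
    intro x y
    have : ∀ z : Fin n, ∑ w : Fin n,
        (if y = z then |((x:ℕ):ℚ) - ((y:ℕ):ℚ)| * |((z:ℕ):ℚ) - ((w:ℕ):ℚ)| else 0)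
        = (if y = z then ∑ w : Fin n, |((x:ℕ):ℚ) - ((y:ℕ):ℚ)| * |((z:ℕ):ℚ) - ((w:ℕ):ℚ)| else 0) := by
      intro z
      by_cases h : y = z <;> simp [h]
    rw [Finset.sum_congr rfl fun z _ => this z,
      Finset.sum_ite_eq Finset.univ y
        (fun z => ∑ w : Fin n, |((x:ℕ):ℚ) - ((y:ℕ):ℚ)| * |((z:ℕ):ℚ) - ((w:ℕ):ℚ)|)]
    simp [abs_sub_comm]
  calc ∑ x : Fin n, ∑ y : Fin n, ∑ z : Fin n, ∑ w : Fin n,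
        (if y = z then |((x:ℕ):ℚ) - ((y:ℕ):ℚ)| * |((z:ℕ):ℚ) - ((w:ℕ):ℚ)| else 0)
      = ∑ x : Fin n, ∑ y : Fin n, ∑ w : Fin n,
          |((y:ℕ):ℚ) - ((x:ℕ):ℚ)| * |((y:ℕ):ℚ) - ((w:ℕ):ℚ)| :=
        Finset.sum_congr rfl fun x _ => Finset.sum_congr rfl fun y _ => coll x y
    _ = ∑ y : Fin n, ∑ x : Fin n, ∑ w : Fin n,
          |((y:ℕ):ℚ) - ((x:ℕ):ℚ)| * |((y:ℕ):ℚ) - ((w:ℕ):ℚ)| := Finset.sum_comm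
    _ = ∑ y : Fin n, (∑ x : Fin n, |((y:ℕ):ℚ) - ((x:ℕ):ℚ)|)^2 := by
        refine Finset.sum_congr rfl fun y _ => ?_
        rw [sq, Finset.sum_mul_sum]
    _ = _ := VLA2 n

-- y = w
lemma VLc4 (n : ℕ) :
    ∑ x : Fin n, ∑ y : Fin n, ∑ z : Fin n, ∑ w : Fin n,
        (if y = w then |((x:ℕ):ℚ) - ((y:ℕ):ℚ)| * |((z:ℕ):ℚ) - ((w:ℕ):ℚ)| else 0)
      = 7*(n:ℚ)^5/60 - (n:ℚ)^3/4 + 2*(n:ℚ)/15 := by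
  have coll : ∀ x y z : Fin n, ∑ w : Fin n,
      (if y = w then |((x:ℕ):ℚ) - ((y:ℕ):ℚ)| * |((z:ℕ):ℚ) - ((w:ℕ):ℚ)| else 0)
      = |((y:ℕ):ℚ) - ((x:ℕ):ℚ)| * |((y:ℕ):ℚ) - ((z:ℕ):ℚ)| := by
    intro x y z
    rw [Finset.sum_ite_eq Finset.univ y
      (fun w => |((x:ℕ):ℚ) - ((y:ℕ):ℚ)| * |((z:ℕ):ℚ) - ((w:ℕ):ℚ)|)]
    simp [abs_sub_comm]
  calc ∑ x : Fin n, ∑ y : Fin n, ∑ z : Fin n, ∑ w : Fin n,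
        (if y = w then |((x:ℕ):ℚ) - ((y:ℕ):ℚ)| * |((z:ℕ):ℚ) - ((w:ℕ):ℚ)| else 0)
      = ∑ x : Fin n, ∑ y : Fin n, ∑ z : Fin n,
          |((y:ℕ):ℚ) - ((x:ℕ):ℚ)| * |((y:ℕ):ℚ) - ((z:ℕ):ℚ)| :=
        Finset.sum_congr rfl fun x _ => Finset.sum_congr rfl fun y _ =>
          Finset.sum_congr rfl fun z _ => coll x y z
    _ = ∑ y : Fin n, ∑ x : Fin n, ∑ z : Fin n,
          |((y:ℕ):ℚ) - ((x:ℕ):ℚ)| * |((y:ℕ):ℚ) - ((z:ℕ):ℚ)| := Finset.sum_comm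
    _ = ∑ y : Fin n, (∑ x : Fin n, |((y:ℕ):ℚ) - ((x:ℕ):ℚ)|)^2 := by
        refine Finset.sum_congr rfl fun y _ => ?_
        rw [sq, Finset.sum_mul_sum]
    _ = _ := VLA2 n

-- x = z ∧ y = w
lemma VLc5 (n : ℕ) :
    ∑ x : Fin n, ∑ y : Fin n, ∑ z : Fin n, ∑ w : Fin n,
        (if x = z ∧ y = w then |((x:ℕ):ℚ) - ((y:ℕ):ℚ)| * |((z:ℕ):ℚ) - ((w:ℕ):ℚ)| else 0)
      = ((n:ℚ)^4 - (n:ℚ)^2)/6 := by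
  have coll : ∀ x y : Fin n, ∑ z : Fin n, ∑ w : Fin n,
      (if x = z ∧ y = w then |((x:ℕ):ℚ) - ((y:ℕ):ℚ)| * |((z:ℕ):ℚ) - ((w:ℕ):ℚ)| else 0)
      = |((x:ℕ):ℚ) - ((y:ℕ):ℚ)| * |((x:ℕ):ℚ) - ((y:ℕ):ℚ)| := by
    intro x y
    have inner : ∀ z : Fin n, ∑ w : Fin n,
        (if x = z ∧ y = w then |((x:ℕ):ℚ) - ((y:ℕ):ℚ)| * |((z:ℕ):ℚ) - ((w:ℕ):ℚ)| else 0)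
        = (if x = z then |((x:ℕ):ℚ) - ((y:ℕ):ℚ)| * |((z:ℕ):ℚ) - ((y:ℕ):ℚ)| else 0) := by
      intro z
      by_cases h : x = z
      · subst h
        have e : ∀ w : Fin n,
            (if x = x ∧ y = w then |((x:ℕ):ℚ) - ((y:ℕ):ℚ)| * |((x:ℕ):ℚ) - ((w:ℕ):ℚ)| else 0)
            = (if y = w then |((x:ℕ):ℚ) - ((y:ℕ):ℚ)| * |((x:ℕ):ℚ) - ((w:ℕ):ℚ)| else 0) :=
          fun w => by simp
        rw [Finset.sum_congr rfl fun w _ => e w,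
          Finset.sum_ite_eq Finset.univ y
            (fun w => |((x:ℕ):ℚ) - ((y:ℕ):ℚ)| * |((x:ℕ):ℚ) - ((w:ℕ):ℚ)|)]
        simp
      · simp [h]
    rw [Finset.sum_congr rfl fun z _ => inner z,
      Finset.sum_ite_eq Finset.univ x
        (fun z => |((x:ℕ):ℚ) - ((y:ℕ):ℚ)| * |((z:ℕ):ℚ) - ((y:ℕ):ℚ)|)]
    simp
  calc ∑ x : Fin n, ∑ y : Fin n, ∑ z : Fin n, ∑ w : Fin n,
        (if x = z ∧ y = w then |((x:ℕ):ℚ) - ((y:ℕ):ℚ)| * |((z:ℕ):ℚ) - ((w:ℕ):ℚ)| else 0)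
      = ∑ x : Fin n, ∑ y : Fin n,
          |((x:ℕ):ℚ) - ((y:ℕ):ℚ)| * |((x:ℕ):ℚ) - ((y:ℕ):ℚ)| :=
        Finset.sum_congr rfl fun x _ => Finset.sum_congr rfl fun y _ => coll x y
    _ = _ := VL2' n

-- x = w ∧ y = z
lemma VLc6 (n : ℕ) :
    ∑ x : Fin n, ∑ y : Fin n, ∑ z : Fin n, ∑ w : Fin n,
        (if x = w ∧ y = z then |((x:ℕ):ℚ) - ((y:ℕ):ℚ)| * |((z:ℕ):ℚ) - ((w:ℕ):ℚ)| else 0)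
      = ((n:ℚ)^4 - (n:ℚ)^2)/6 := by
  have coll : ∀ x y : Fin n, ∑ z : Fin n, ∑ w : Fin n,
      (if x = w ∧ y = z then |((x:ℕ):ℚ) - ((y:ℕ):ℚ)| * |((z:ℕ):ℚ) - ((w:ℕ):ℚ)| else 0)
      = |((x:ℕ):ℚ) - ((y:ℕ):ℚ)| * |((x:ℕ):ℚ) - ((y:ℕ):ℚ)| := by
    intro x y
    have inner : ∀ z : Fin n, ∑ w : Fin n,
        (if x = w ∧ y = z then |((x:ℕ):ℚ) - ((y:ℕ):ℚ)| * |((z:ℕ):ℚ) - ((w:ℕ):ℚ)| else 0)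
        = (if y = z then |((x:ℕ):ℚ) - ((y:ℕ):ℚ)| * |((z:ℕ):ℚ) - ((x:ℕ):ℚ)| else 0) := by
      intro z
      by_cases h : y = z
      · subst h
        have e : ∀ w : Fin n,
            (if x = w ∧ y = y then |((x:ℕ):ℚ) - ((y:ℕ):ℚ)| * |((y:ℕ):ℚ) - ((w:ℕ):ℚ)| else 0)
            = (if x = w then |((x:ℕ):ℚ) - ((y:ℕ):ℚ)| * |((y:ℕ):ℚ) - ((w:ℕ):ℚ)| else 0) :=
          fun w => by simp
        rw [Finset.sum_congr rfl fun w _ => e w,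
          Finset.sum_ite_eq Finset.univ x
            (fun w => |((x:ℕ):ℚ) - ((y:ℕ):ℚ)| * |((y:ℕ):ℚ) - ((w:ℕ):ℚ)|)]
        simp
      · simp [h]
    rw [Finset.sum_congr rfl fun z _ => inner z,
      Finset.sum_ite_eq Finset.univ y
        (fun z => |((x:ℕ):ℚ) - ((y:ℕ):ℚ)| * |((z:ℕ):ℚ) - ((x:ℕ):ℚ)|)]
    simp [abs_sub_comm, mul_comm]
  calc ∑ x : Fin n, ∑ y : Fin n, ∑ z : Fin n, ∑ w : Fin n,
        (if x = w ∧ y = z then |((x:ℕ):ℚ) - ((y:ℕ):ℚ)| * |((z:ℕ):ℚ) - ((w:ℕ):ℚ)| else 0)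
      = ∑ x : Fin n, ∑ y : Fin n,
          |((x:ℕ):ℚ) - ((y:ℕ):ℚ)| * |((x:ℕ):ℚ) - ((y:ℕ):ℚ)| :=
        Finset.sum_congr rfl fun x _ => Finset.sum_congr rfl fun y _ => coll x y
    _ = _ := VL2' n


lemma VL4 (n : ℕ) :
    ∑ x : Fin n, ∑ y : Fin n, ∑ z : Fin n, ∑ w : Fin n,
        (if x ≠ y ∧ x ≠ z ∧ x ≠ w ∧ y ≠ z ∧ y ≠ w ∧ z ≠ w
          then |((x:ℕ):ℚ) - ((y:ℕ):ℚ)| * |((z:ℕ):ℚ) - ((w:ℕ):ℚ)| else 0)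
      = (((n:ℚ)^3 - (n:ℚ))/3)^2
        - 4*(7*(n:ℚ)^5/60 - (n:ℚ)^3/4 + 2*(n:ℚ)/15)
        + 2*(((n:ℚ)^4 - (n:ℚ)^2)/6) := by
  have h1 : ∀ x y z w : Fin n,
      (if x ≠ y ∧ x ≠ z ∧ x ≠ w ∧ y ≠ z ∧ y ≠ w ∧ z ≠ w
          then |((x:ℕ):ℚ) - ((y:ℕ):ℚ)| * |((z:ℕ):ℚ) - ((w:ℕ):ℚ)| else 0)
        = |((x:ℕ):ℚ) - ((y:ℕ):ℚ)| * |((z:ℕ):ℚ) - ((w:ℕ):ℚ)|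
          - (if x = z then |((x:ℕ):ℚ) - ((y:ℕ):ℚ)| * |((z:ℕ):ℚ) - ((w:ℕ):ℚ)| else 0)
          - (if x = w then |((x:ℕ):ℚ) - ((y:ℕ):ℚ)| * |((z:ℕ):ℚ) - ((w:ℕ):ℚ)| else 0)
          - (if y = z then |((x:ℕ):ℚ) - ((y:ℕ):ℚ)| * |((z:ℕ):ℚ) - ((w:ℕ):ℚ)| else 0)
          - (if y = w then |((x:ℕ):ℚ) - ((y:ℕ):ℚ)| * |((z:ℕ):ℚ) - ((w:ℕ):ℚ)| else 0)
          + (if x = z ∧ y = w then |((x:ℕ):ℚ) - ((y:ℕ):ℚ)| * |((z:ℕ):ℚ) - ((w:ℕ):ℚ)| else 0)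
          + (if x = w ∧ y = z then |((x:ℕ):ℚ) - ((y:ℕ):ℚ)| * |((z:ℕ):ℚ) - ((w:ℕ):ℚ)| else 0) := by
    intro x y z w
    by_cases hxy : x = y
    · subst hxy; simp
    · by_cases hzw : z = w
      · subst hzw; simp
      · by_cases h1 : x = z <;> by_cases h2 : x = w <;> by_cases h3 : y = z <;>
          by_cases h4 : y = w <;> simp_all
  calc ∑ x : Fin n, ∑ y : Fin n, ∑ z : Fin n, ∑ w : Fin n,
        (if x ≠ y ∧ x ≠ z ∧ x ≠ w ∧ y ≠ z ∧ y ≠ w ∧ z ≠ w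
          then |((x:ℕ):ℚ) - ((y:ℕ):ℚ)| * |((z:ℕ):ℚ) - ((w:ℕ):ℚ)| else 0)
      = ∑ x : Fin n, ∑ y : Fin n, ∑ z : Fin n, ∑ w : Fin n,
          (|((x:ℕ):ℚ) - ((y:ℕ):ℚ)| * |((z:ℕ):ℚ) - ((w:ℕ):ℚ)|
          - (if x = z then |((x:ℕ):ℚ) - ((y:ℕ):ℚ)| * |((z:ℕ):ℚ) - ((w:ℕ):ℚ)| else 0)
          - (if x = w then |((x:ℕ):ℚ) - ((y:ℕ):ℚ)| * |((z:ℕ):ℚ) - ((w:ℕ):ℚ)| else 0)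
          - (if y = z then |((x:ℕ):ℚ) - ((y:ℕ):ℚ)| * |((z:ℕ):ℚ) - ((w:ℕ):ℚ)| else 0)
          - (if y = w then |((x:ℕ):ℚ) - ((y:ℕ):ℚ)| * |((z:ℕ):ℚ) - ((w:ℕ):ℚ)| else 0)
          + (if x = z ∧ y = w then |((x:ℕ):ℚ) - ((y:ℕ):ℚ)| * |((z:ℕ):ℚ) - ((w:ℕ):ℚ)| else 0)
          + (if x = w ∧ y = z then |((x:ℕ):ℚ) - ((y:ℕ):ℚ)| * |((z:ℕ):ℚ) - ((w:ℕ):ℚ)| else 0)) :=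
        Finset.sum_congr rfl fun x _ => Finset.sum_congr rfl fun y _ =>
          Finset.sum_congr rfl fun z _ => Finset.sum_congr rfl fun w _ => h1 x y z w
    _ = _ := by
        simp only [Finset.sum_add_distrib, Finset.sum_sub_distrib]
        rw [VLfull4 n, VLc1 n, VLc2 n, VLc3 n, VLc4 n, VLc5 n, VLc6 n]
        ring


lemma two_le_of_ne {u v : Fin n} (h : u ≠ v) : 2 ≤ n := by
  have hc : ({u, v} : Finset (Fin n)).card = 2 := by
    rw [Finset.card_insert_of_notMem (by simp [h]), Finset.card_singleton]
  have := Finset.card_le_univ ({u, v} : Finset (Fin n))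
  rwa [hc, Fintype.card_fin] at this

lemma three_le_of_ne {u v w : Fin n} (h1 : u ≠ v) (h2 : u ≠ w) (h3 : v ≠ w) : 3 ≤ n := by
  have hc : ({u, v, w} : Finset (Fin n)).card = 3 := by
    rw [Finset.card_insert_of_notMem (by simp [h1, h2]),
      Finset.card_insert_of_notMem (by simp [h3]), Finset.card_singleton]
  have := Finset.card_le_univ ({u, v, w} : Finset (Fin n))
  rwa [hc, Fintype.card_fin] at this

lemma four_le_of_ne {u v w x : Fin n} (h1 : u ≠ v) (h2 : u ≠ w) (h3 : u ≠ x)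
    (h4 : v ≠ w) (h5 : v ≠ x) (h6 : w ≠ x) : 4 ≤ n := by
  have hc : ({u, v, w, x} : Finset (Fin n)).card = 4 := by
    rw [Finset.card_insert_of_notMem (by simp [h1, h2, h3]),
      Finset.card_insert_of_notMem (by simp [h4, h5]),
      Finset.card_insert_of_notMem (by simp [h6]), Finset.card_singleton]
  have := Finset.card_le_univ ({u, v, w, x} : Finset (Fin n))
  rwa [hc, Fintype.card_fin] at this

lemma fac2 (h : 2 ≤ n) :
    ((Nat.factorial n : ℕ) : ℚ) = ((Nat.factorial (n-2) : ℕ) : ℚ) * ((n:ℚ) * ((n:ℚ)-1)) := by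
  obtain ⟨m, rfl⟩ := Nat.exists_eq_add_of_le h
  rw [show 2 + m - 2 = m by omega, show 2 + m = m + 1 + 1 by omega,
    Nat.factorial_succ, Nat.factorial_succ]
  push_cast
  ring

lemma fac3 (h : 3 ≤ n) :
    ((Nat.factorial n : ℕ) : ℚ)
      = ((Nat.factorial (n-3) : ℕ) : ℚ) * ((n:ℚ) * ((n:ℚ)-1) * ((n:ℚ)-2)) := by
  obtain ⟨m, rfl⟩ := Nat.exists_eq_add_of_le h
  rw [show 3 + m - 3 = m by omega, show 3 + m = m + 1 + 1 + 1 by omega,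
    Nat.factorial_succ, Nat.factorial_succ, Nat.factorial_succ]
  push_cast
  ring

lemma fac4 (h : 4 ≤ n) :
    ((Nat.factorial n : ℕ) : ℚ)
      = ((Nat.factorial (n-4) : ℕ) : ℚ)
        * ((n:ℚ) * ((n:ℚ)-1) * ((n:ℚ)-2) * ((n:ℚ)-3)) := by
  obtain ⟨m, rfl⟩ := Nat.exists_eq_add_of_le h
  rw [show 4 + m - 4 = m by omega, show 4 + m = m + 1 + 1 + 1 + 1 by omega,
    Nat.factorial_succ, Nat.factorial_succ, Nat.factorial_succ, Nat.factorial_succ]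
  push_cast
  ring

lemma classA (A B : Fin n) (hAB : A ≠ B) :
    ∑ π : Equiv.Perm (Fin n),
        |((π A : ℕ):ℚ) - ((π B : ℕ):ℚ)| * |((π A : ℕ):ℚ) - ((π B : ℕ):ℚ)|
      = ((Nat.factorial n : ℕ) : ℚ) * (((n:ℚ)^2 + (n:ℚ))/6) := by
  have hn : 2 ≤ n := two_le_of_ne hAB
  have key := sum_perm_comp ![A, B] ((inj2_iff A B).mpr hAB)
    (fun x => |((x 0 : ℕ):ℚ) - ((x 1 : ℕ):ℚ)| * |((x 0 : ℕ):ℚ) - ((x 1 : ℕ):ℚ)|)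
  simp only [Matrix.cons_val_zero, Matrix.cons_val_one, Matrix.head_cons] at key
  rw [key, sum_fun2 (fun x => if Injective x
      then |((x 0 : ℕ):ℚ) - ((x 1 : ℕ):ℚ)| * |((x 0 : ℕ):ℚ) - ((x 1 : ℕ):ℚ)| else 0)]
  have : ∀ a b : Fin n,
      (if Injective ![a, b]
        then |((![a,b] 0 : ℕ):ℚ) - ((![a,b] 1 : ℕ):ℚ)| * |((![a,b] 0 : ℕ):ℚ) - ((![a,b] 1 : ℕ):ℚ)|
        else 0)
      = (if a ≠ b then |((a:ℕ):ℚ) - ((b:ℕ):ℚ)| * |((a:ℕ):ℚ) - ((b:ℕ):ℚ)| else 0) := by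
    intro a b
    simp only [Matrix.cons_val_zero, Matrix.cons_val_one, Matrix.head_cons, inj2_iff]
  rw [Finset.sum_congr rfl fun a _ => Finset.sum_congr rfl fun b _ => this a b, VL2 n,
    fac2 hn]
  ring

lemma classC (A B C : Fin n) (hAB : A ≠ B) (hAC : A ≠ C) (hBC : B ≠ C) :
    ∑ π : Equiv.Perm (Fin n),
        |((π A : ℕ):ℚ) - ((π B : ℕ):ℚ)| * |((π A : ℕ):ℚ) - ((π C : ℕ):ℚ)|
      = ((Nat.factorial n : ℕ) : ℚ) * ((7*(n:ℚ)^2 + 11*(n:ℚ) + 4)/60) := by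
  have hn : 3 ≤ n := three_le_of_ne hAB hAC hBC
  have key := sum_perm_comp ![A, B, C] ((inj3_iff A B C).mpr ⟨hAB, hAC, hBC⟩)
    (fun x => |((x 0 : ℕ):ℚ) - ((x 1 : ℕ):ℚ)| * |((x 0 : ℕ):ℚ) - ((x 2 : ℕ):ℚ)|)
  simp only [Matrix.cons_val_zero, Matrix.cons_val_one, Matrix.head_cons,
    Matrix.cons_val_two, Matrix.tail_cons] at key
  rw [key, sum_fun3 (fun x => if Injective x
      then |((x 0 : ℕ):ℚ) - ((x 1 : ℕ):ℚ)| * |((x 0 : ℕ):ℚ) - ((x 2 : ℕ):ℚ)| else 0)]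
  have : ∀ a b c : Fin n,
      (if Injective ![a, b, c]
        then |((![a,b,c] 0 : ℕ):ℚ) - ((![a,b,c] 1 : ℕ):ℚ)|
            * |((![a,b,c] 0 : ℕ):ℚ) - ((![a,b,c] 2 : ℕ):ℚ)|
        else 0)
      = (if a ≠ b ∧ a ≠ c ∧ b ≠ c
          then |((a:ℕ):ℚ) - ((b:ℕ):ℚ)| * |((a:ℕ):ℚ) - ((c:ℕ):ℚ)| else 0) := by
    intro a b c
    simp only [Matrix.cons_val_zero, Matrix.cons_val_one, Matrix.head_cons,
      Matrix.cons_val_two, Matrix.tail_cons, inj3_iff]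
  rw [Finset.sum_congr rfl fun a _ => Finset.sum_congr rfl fun b _ =>
    Finset.sum_congr rfl fun c _ => this a b c, VL3 n, fac3 hn]
  ring

lemma classD (A B C D : Fin n) (h1 : A ≠ B) (h2 : A ≠ C) (h3 : A ≠ D)
    (h4 : B ≠ C) (h5 : B ≠ D) (h6 : C ≠ D) :
    ∑ π : Equiv.Perm (Fin n),
        |((π A : ℕ):ℚ) - ((π B : ℕ):ℚ)| * |((π C : ℕ):ℚ) - ((π D : ℕ):ℚ)|
      = ((Nat.factorial n : ℕ) : ℚ) * ((5*(n:ℚ)^2 + 9*(n:ℚ) + 4)/45) := by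
  have hn : 4 ≤ n := four_le_of_ne h1 h2 h3 h4 h5 h6
  have key := sum_perm_comp ![A, B, C, D] ((inj4_iff A B C D).mpr ⟨h1, h2, h3, h4, h5, h6⟩)
    (fun x => |((x 0 : ℕ):ℚ) - ((x 1 : ℕ):ℚ)| * |((x 2 : ℕ):ℚ) - ((x 3 : ℕ):ℚ)|)
  simp only [Matrix.cons_val_zero, Matrix.cons_val_one, Matrix.head_cons,
    Matrix.cons_val_two, Matrix.tail_cons, Matrix.cons_val_three] at key
  rw [key, sum_fun4 (fun x => if Injective x
      then |((x 0 : ℕ):ℚ) - ((x 1 : ℕ):ℚ)| * |((x 2 : ℕ):ℚ) - ((x 3 : ℕ):ℚ)| else 0)]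
  have : ∀ a b c d : Fin n,
      (if Injective ![a, b, c, d]
        then |((![a,b,c,d] 0 : ℕ):ℚ) - ((![a,b,c,d] 1 : ℕ):ℚ)|
            * |((![a,b,c,d] 2 : ℕ):ℚ) - ((![a,b,c,d] 3 : ℕ):ℚ)|
        else 0)
      = (if a ≠ b ∧ a ≠ c ∧ a ≠ d ∧ b ≠ c ∧ b ≠ d ∧ c ≠ d
          then |((a:ℕ):ℚ) - ((b:ℕ):ℚ)| * |((c:ℕ):ℚ) - ((d:ℕ):ℚ)| else 0) := by
    intro a b c d
    simp only [Matrix.cons_val_zero, Matrix.cons_val_one, Matrix.head_cons,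
      Matrix.cons_val_two, Matrix.tail_cons, Matrix.cons_val_three, inj4_iff]
  rw [Finset.sum_congr rfl fun a _ => Finset.sum_congr rfl fun b _ =>
    Finset.sum_congr rfl fun c _ => Finset.sum_congr rfl fun d _ => this a b c d,
    VL4 n, fac4 hn]
  ring


lemma perm_pointwise (u v u' v' : Fin n) (huv : u ≠ v) (huv' : u' ≠ v') :
    ∑ π : Equiv.Perm (Fin n),
        |((π u : ℕ):ℚ) - ((π v : ℕ):ℚ)| * |((π u' : ℕ):ℚ) - ((π v' : ℕ):ℚ)|
      = ((Nat.factorial n : ℕ) : ℚ) *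
          ((5*(n:ℚ)^2 + 9*(n:ℚ) + 4)/45
            + ((7*(n:ℚ)^2 + 11*(n:ℚ) + 4)/60 - (5*(n:ℚ)^2 + 9*(n:ℚ) + 4)/45)
              * ((if u = u' then (1:ℚ) else 0) + (if u = v' then (1:ℚ) else 0)
                + (if v = u' then (1:ℚ) else 0) + (if v = v' then (1:ℚ) else 0))
            + (((n:ℚ)^2 + (n:ℚ))/6 - 2*((7*(n:ℚ)^2 + 11*(n:ℚ) + 4)/60)
                + (5*(n:ℚ)^2 + 9*(n:ℚ) + 4)/45)
              * ((if u = u' ∧ v = v' then (1:ℚ) else 0)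
                + (if u = v' ∧ v = u' then (1:ℚ) else 0))) := by
  by_cases h1 : u = u'
  · subst h1
    by_cases h4 : v = v'
    · subst h4
      rw [classA u v huv]
      congr 1
      simp [huv, Ne.symm huv]
      try ring
    · rw [classC u v v' huv huv' h4]
      congr 1
      simp [huv, Ne.symm huv, huv', h4]
      try ring
  · by_cases h2 : u = v'
    · subst h2
      by_cases h3 : v = u'
      · subst h3
        have tr : ∑ π : Equiv.Perm (Fin n),
            |((π u : ℕ):ℚ) - ((π v : ℕ):ℚ)| * |((π v : ℕ):ℚ) - ((π u : ℕ):ℚ)|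
            = ∑ π : Equiv.Perm (Fin n),
            |((π u : ℕ):ℚ) - ((π v : ℕ):ℚ)| * |((π u : ℕ):ℚ) - ((π v : ℕ):ℚ)| :=
          Finset.sum_congr rfl fun π _ => by
            rw [abs_sub_comm (((π v : ℕ)):ℚ) (((π u : ℕ)):ℚ)]
        rw [tr, classA u v huv]
        congr 1
        simp [huv, Ne.symm huv]
        try ring
      · have tr : ∑ π : Equiv.Perm (Fin n),
            |((π u : ℕ):ℚ) - ((π v : ℕ):ℚ)| * |((π u' : ℕ):ℚ) - ((π u : ℕ):ℚ)|
            = ∑ π : Equiv.Perm (Fin n),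
            |((π u : ℕ):ℚ) - ((π v : ℕ):ℚ)| * |((π u : ℕ):ℚ) - ((π u' : ℕ):ℚ)| :=
          Finset.sum_congr rfl fun π _ => by
            rw [abs_sub_comm (((π u' : ℕ)):ℚ) (((π u : ℕ)):ℚ)]
        rw [tr, classC u v u' huv h1 h3]
        congr 1
        simp [huv, Ne.symm huv, h1, h3]
        try ring
    · by_cases h3 : v = u'
      · subst h3
        have tr : ∑ π : Equiv.Perm (Fin n),
            |((π u : ℕ):ℚ) - ((π v : ℕ):ℚ)| * |((π v : ℕ):ℚ) - ((π v' : ℕ):ℚ)|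
            = ∑ π : Equiv.Perm (Fin n),
            |((π v : ℕ):ℚ) - ((π u : ℕ):ℚ)| * |((π v : ℕ):ℚ) - ((π v' : ℕ):ℚ)| :=
          Finset.sum_congr rfl fun π _ => by
            rw [abs_sub_comm (((π u : ℕ)):ℚ) (((π v : ℕ)):ℚ)]
        rw [tr, classC v u v' (Ne.symm huv) huv' h2]
        congr 1
        simp [huv, Ne.symm huv, h2, huv', h1]
        try ring
      · by_cases h4 : v = v'
        · subst h4
          have tr : ∑ π : Equiv.Perm (Fin n),
              |((π u : ℕ):ℚ) - ((π v : ℕ):ℚ)| * |((π u' : ℕ):ℚ) - ((π v : ℕ):ℚ)|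
              = ∑ π : Equiv.Perm (Fin n),
              |((π v : ℕ):ℚ) - ((π u : ℕ):ℚ)| * |((π v : ℕ):ℚ) - ((π u' : ℕ):ℚ)| :=
            Finset.sum_congr rfl fun π _ => by
              rw [abs_sub_comm (((π u : ℕ)):ℚ) (((π v : ℕ)):ℚ),
                abs_sub_comm (((π u' : ℕ)):ℚ) (((π v : ℕ)):ℚ)]
          rw [tr, classC v u u' (Ne.symm huv) (Ne.symm huv') h1]
          congr 1
          simp [huv, Ne.symm huv, Ne.symm huv', h1, h2, h3]
          try ring
        · rw [classD u v u' v' huv h1 h2 h3 h4 huv']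
          congr 1
          simp [h1, h2, h3, h4]
          try ring


lemma assembly (G : SimpleGraph (Fin n)) [DecidableRel G.Adj] (e0 c1 c2 : ℚ)
    (hpp : ∀ u v u' v' : Fin n, u ≠ v → u' ≠ v' →
      ∑ π : Equiv.Perm (Fin n),
          |((π u : ℕ):ℚ) - ((π v : ℕ):ℚ)| * |((π u' : ℕ):ℚ) - ((π v' : ℕ):ℚ)|
        = ((Nat.factorial n : ℕ) : ℚ) *
            (e0 + c1 * ((if u = u' then (1:ℚ) else 0) + (if u = v' then (1:ℚ) else 0)
                + (if v = u' then (1:ℚ) else 0) + (if v = v' then (1:ℚ) else 0))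
              + c2 * ((if u = u' ∧ v = v' then (1:ℚ) else 0)
                + (if u = v' ∧ v = u' then (1:ℚ) else 0)))) :
    ∑ π : Equiv.Perm (Fin n),
        (∑ u : Fin n, ∑ v : Fin n,
          if G.Adj u v then |((π u : ℕ):ℚ) - ((π v : ℕ):ℚ)| else 0)
        * (∑ u : Fin n, ∑ v : Fin n,
          if G.Adj u v then |((π u : ℕ):ℚ) - ((π v : ℕ):ℚ)| else 0)
      = ((Nat.factorial n : ℕ) : ℚ) *
          (e0 * (2 * (G.edgeFinset.card : ℚ))^2
            + c1 * (4 * ∑ i : Fin n, (G.degree i : ℚ)^2)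
            + c2 * (4 * (G.edgeFinset.card : ℚ))) := by
  classical
  set aQ : Fin n → Fin n → ℚ := fun u v => if G.Adj u v then (1:ℚ) else 0 with haQ
  have h_row : ∀ u : Fin n, ∑ v : Fin n, aQ u v = (G.degree u : ℚ) := by
    intro u
    rw [haQ]
    simp only [Finset.sum_boole]
    congr 1
    rw [← SimpleGraph.neighborFinset_eq_filter]
    rfl
  have h_sym : ∀ u v : Fin n, aQ u v = aQ v u := by
    intro u v
    rw [haQ]
    simp only [SimpleGraph.adj_comm]
  have h_col : ∀ v : Fin n, ∑ u : Fin n, aQ u v = (G.degree v : ℚ) := by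
    intro v
    rw [Finset.sum_congr rfl fun u _ => h_sym u v]
    exact h_row v
  have h_2m : ∑ u : Fin n, (G.degree u : ℚ) = 2 * (G.edgeFinset.card : ℚ) := by
    have := SimpleGraph.sum_degrees_eq_twice_card_edges G
    exact_mod_cast congrArg (fun k : ℕ => (k : ℚ)) this
  have h_idem : ∀ u v : Fin n, aQ u v * aQ u v = aQ u v := by
    intro u v
    rw [haQ]
    by_cases h : G.Adj u v <;> simp [h]
  -- six counting sums
  have hT0 : ∑ u : Fin n, ∑ u' : Fin n, ∑ v : Fin n, ∑ v' : Fin n,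
      aQ u v * aQ u' v' = (2 * (G.edgeFinset.card : ℚ))^2 := by
    have inner : ∀ u u' : Fin n, ∑ v : Fin n, ∑ v' : Fin n, aQ u v * aQ u' v'
        = (G.degree u : ℚ) * (G.degree u' : ℚ) := by
      intro u u'
      rw [← h_row u, ← h_row u', Finset.sum_mul_sum]
    rw [Finset.sum_congr rfl fun u _ => Finset.sum_congr rfl fun u' _ => inner u u',
      ← Finset.sum_mul_sum, h_2m]
    ring
  have hT1a : ∑ u : Fin n, ∑ u' : Fin n, ∑ v : Fin n, ∑ v' : Fin n,
      (aQ u v * aQ u' v') * (if u = u' then (1:ℚ) else 0)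
      = ∑ i : Fin n, (G.degree i : ℚ)^2 := by
    have inner : ∀ u u' : Fin n, ∑ v : Fin n, ∑ v' : Fin n,
        (aQ u v * aQ u' v') * (if u = u' then (1:ℚ) else 0)
        = if u = u' then (G.degree u : ℚ) * (G.degree u' : ℚ) else 0 := by
      intro u u'
      by_cases h : u = u'
      · subst h
        simp only [eq_self_iff_true, if_true, mul_one]
        rw [← h_row u, Finset.sum_mul_sum]
      · simp [h]
    rw [Finset.sum_congr rfl fun u _ => Finset.sum_congr rfl fun u' _ => inner u u']
    rw [Finset.sum_congr rfl fun u _ => Finset.sum_ite_eq Finset.univ u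
      (fun u' => (G.degree u : ℚ) * (G.degree u' : ℚ))]
    exact Finset.sum_congr rfl fun u _ => by simp [sq]
  have hT1b : ∑ u : Fin n, ∑ u' : Fin n, ∑ v : Fin n, ∑ v' : Fin n,
      (aQ u v * aQ u' v') * (if u = v' then (1:ℚ) else 0)
      = ∑ i : Fin n, (G.degree i : ℚ)^2 := by
    have inner : ∀ u u' v : Fin n, ∑ v' : Fin n,
        (aQ u v * aQ u' v') * (if u = v' then (1:ℚ) else 0) = aQ u v * aQ u' u := by
      intro u u' v
      have e : ∀ v' : Fin n, (aQ u v * aQ u' v') * (if u = v' then (1:ℚ) else 0)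
          = if u = v' then aQ u v * aQ u' v' else 0 := by
        intro v'
        by_cases h : u = v' <;> simp [h]
      rw [Finset.sum_congr rfl fun v' _ => e v',
        Finset.sum_ite_eq Finset.univ u (fun v' => aQ u v * aQ u' v')]
      simp
    rw [Finset.sum_congr rfl fun u _ => Finset.sum_congr rfl fun u' _ =>
      Finset.sum_congr rfl fun v _ => inner u u' v]
    have step2 : ∀ u u' : Fin n, ∑ v : Fin n, aQ u v * aQ u' u
        = (G.degree u : ℚ) * aQ u' u := by
      intro u u'
      rw [← Finset.sum_mul, h_row u]
    rw [Finset.sum_congr rfl fun u _ => Finset.sum_congr rfl fun u' _ => step2 u u']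
    have step3 : ∀ u : Fin n, ∑ u' : Fin n, (G.degree u : ℚ) * aQ u' u
        = (G.degree u : ℚ) * (G.degree u : ℚ) := by
      intro u
      rw [← Finset.mul_sum, h_col u]
    rw [Finset.sum_congr rfl fun u _ => step3 u]
    exact Finset.sum_congr rfl fun u _ => by rw [sq]
  have hT1c : ∑ u : Fin n, ∑ u' : Fin n, ∑ v : Fin n, ∑ v' : Fin n,
      (aQ u v * aQ u' v') * (if v = u' then (1:ℚ) else 0)
      = ∑ i : Fin n, (G.degree i : ℚ)^2 := by
    have inner : ∀ u u' v : Fin n, ∑ v' : Fin n,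
        (aQ u v * aQ u' v') * (if v = u' then (1:ℚ) else 0)
        = (aQ u v * (G.degree u' : ℚ)) * (if v = u' then (1:ℚ) else 0) := by
      intro u u' v
      have e : ∀ v' : Fin n, (aQ u v * aQ u' v') * (if v = u' then (1:ℚ) else 0)
          = (aQ u v * (if v = u' then (1:ℚ) else 0)) * aQ u' v' := fun v' => by ring
      rw [Finset.sum_congr rfl fun v' _ => e v', ← Finset.mul_sum, h_row u']
      ring
    rw [Finset.sum_congr rfl fun u _ => Finset.sum_congr rfl fun u' _ =>
      Finset.sum_congr rfl fun v _ => inner u u' v]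
    have step2 : ∀ u u' : Fin n, ∑ v : Fin n,
        (aQ u v * (G.degree u' : ℚ)) * (if v = u' then (1:ℚ) else 0)
        = aQ u u' * (G.degree u' : ℚ) := by
      intro u u'
      have e : ∀ v : Fin n, (aQ u v * (G.degree u' : ℚ)) * (if v = u' then (1:ℚ) else 0)
          = if v = u' then aQ u v * (G.degree u' : ℚ) else 0 := by
        intro v
        by_cases h : v = u' <;> simp [h]
      rw [Finset.sum_congr rfl fun v _ => e v,
        Finset.sum_ite_eq' Finset.univ u' (fun v => aQ u v * (G.degree u' : ℚ))]
      simp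
    rw [Finset.sum_congr rfl fun u _ => Finset.sum_congr rfl fun u' _ => step2 u u',
      Finset.sum_comm]
    have step3 : ∀ u' : Fin n, ∑ u : Fin n, aQ u u' * (G.degree u' : ℚ)
        = (G.degree u' : ℚ) * (G.degree u' : ℚ) := by
      intro u'
      rw [← Finset.sum_mul, h_col u']
    rw [Finset.sum_congr rfl fun u' _ => step3 u']
    exact Finset.sum_congr rfl fun u _ => by rw [sq]
  have hT1d : ∑ u : Fin n, ∑ u' : Fin n, ∑ v : Fin n, ∑ v' : Fin n,
      (aQ u v * aQ u' v') * (if v = v' then (1:ℚ) else 0)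
      = ∑ i : Fin n, (G.degree i : ℚ)^2 := by
    have inner : ∀ u u' v : Fin n, ∑ v' : Fin n,
        (aQ u v * aQ u' v') * (if v = v' then (1:ℚ) else 0) = aQ u v * aQ u' v := by
      intro u u' v
      have e : ∀ v' : Fin n, (aQ u v * aQ u' v') * (if v = v' then (1:ℚ) else 0)
          = if v = v' then aQ u v * aQ u' v' else 0 := by
        intro v'
        by_cases h : v = v' <;> simp [h]
      rw [Finset.sum_congr rfl fun v' _ => e v',
        Finset.sum_ite_eq Finset.univ v (fun v' => aQ u v * aQ u' v')]
      simp
    rw [Finset.sum_congr rfl fun u _ => Finset.sum_congr rfl fun u' _ =>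
      Finset.sum_congr rfl fun v _ => inner u u' v]
    have step2 : ∀ u : Fin n, ∑ u' : Fin n, ∑ v : Fin n, aQ u v * aQ u' v
        = ∑ v : Fin n, aQ u v * (G.degree v : ℚ) := by
      intro u
      rw [Finset.sum_comm]
      refine Finset.sum_congr rfl fun v _ => ?_
      rw [← Finset.mul_sum, h_col v]
    rw [Finset.sum_congr rfl fun u _ => step2 u, Finset.sum_comm]
    refine Finset.sum_congr rfl fun v _ => ?_
    rw [← Finset.sum_mul, h_col v, sq]
  have hT2a : ∑ u : Fin n, ∑ u' : Fin n, ∑ v : Fin n, ∑ v' : Fin n,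
      (aQ u v * aQ u' v') * (if u = u' ∧ v = v' then (1:ℚ) else 0)
      = 2 * (G.edgeFinset.card : ℚ) := by
    have inner : ∀ u u' v : Fin n, ∑ v' : Fin n,
        (aQ u v * aQ u' v') * (if u = u' ∧ v = v' then (1:ℚ) else 0)
        = if u = u' then aQ u v * aQ u' v else 0 := by
      intro u u' v
      by_cases h : u = u'
      · subst h
        have e : ∀ v' : Fin n, (aQ u v * aQ u v') * (if u = u ∧ v = v' then (1:ℚ) else 0)
            = if v = v' then aQ u v * aQ u v' else 0 := by
          intro v'
          by_cases h2 : v = v' <;> simp [h2]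
        rw [Finset.sum_congr rfl fun v' _ => e v',
          Finset.sum_ite_eq Finset.univ v (fun v' => aQ u v * aQ u v')]
        simp
      · simp [h]
    rw [Finset.sum_congr rfl fun u _ => Finset.sum_congr rfl fun u' _ =>
      Finset.sum_congr rfl fun v _ => inner u u' v]
    have step2 : ∀ u : Fin n, ∑ u' : Fin n, ∑ v : Fin n,
        (if u = u' then aQ u v * aQ u' v else 0) = ∑ v : Fin n, aQ u v := by
      intro u
      have e : ∀ u' : Fin n, ∑ v : Fin n, (if u = u' then aQ u v * aQ u' v else 0)
          = if u = u' then ∑ v : Fin n, aQ u v * aQ u' v else 0 := by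
        intro u'
        by_cases h : u = u' <;> simp [h]
      rw [Finset.sum_congr rfl fun u' _ => e u',
        Finset.sum_ite_eq Finset.univ u (fun u' => ∑ v : Fin n, aQ u v * aQ u' v)]
      simp only [Finset.mem_univ, if_true]
      exact Finset.sum_congr rfl fun v _ => h_idem u v
    rw [Finset.sum_congr rfl fun u _ => step2 u]
    rw [Finset.sum_congr rfl fun u _ => h_row u]
    exact h_2m
  have hT2b : ∑ u : Fin n, ∑ u' : Fin n, ∑ v : Fin n, ∑ v' : Fin n,
      (aQ u v * aQ u' v') * (if u = v' ∧ v = u' then (1:ℚ) else 0)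
      = 2 * (G.edgeFinset.card : ℚ) := by
    have inner : ∀ u u' v : Fin n, ∑ v' : Fin n,
        (aQ u v * aQ u' v') * (if u = v' ∧ v = u' then (1:ℚ) else 0)
        = if v = u' then aQ u v * aQ u' u else 0 := by
      intro u u' v
      by_cases h : v = u'
      · subst h
        have e : ∀ v' : Fin n, (aQ u v * aQ v v') * (if u = v' ∧ v = v then (1:ℚ) else 0)
            = if u = v' then aQ u v * aQ v v' else 0 := by
          intro v'
          by_cases h2 : u = v' <;> simp [h2]
        rw [Finset.sum_congr rfl fun v' _ => e v',
          Finset.sum_ite_eq Finset.univ u (fun v' => aQ u v * aQ v v')]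
        simp
      · simp [h]
    rw [Finset.sum_congr rfl fun u _ => Finset.sum_congr rfl fun u' _ =>
      Finset.sum_congr rfl fun v _ => inner u u' v]
    have step2 : ∀ u u' : Fin n, ∑ v : Fin n,
        (if v = u' then aQ u v * aQ u' u else 0) = aQ u u' * aQ u' u := by
      intro u u'
      rw [Finset.sum_ite_eq' Finset.univ u' (fun v => aQ u v * aQ u' u)]
      simp
    rw [Finset.sum_congr rfl fun u _ => Finset.sum_congr rfl fun u' _ => step2 u u']
    have step3 : ∀ u : Fin n, ∑ u' : Fin n, aQ u u' * aQ u' u = (G.degree u : ℚ) := by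
      intro u
      have e : ∀ u' : Fin n, aQ u u' * aQ u' u = aQ u u' := by
        intro u'
        rw [← h_sym u u', h_idem]
      rw [Finset.sum_congr rfl fun u' _ => e u', h_row u]
    rw [Finset.sum_congr rfl fun u _ => step3 u]
    exact h_2m
  have helperA : ∀ F G : Fin n → Fin n → Fin n → Fin n → ℚ,
      ∑ u : Fin n, ∑ u' : Fin n, ∑ v : Fin n, ∑ v' : Fin n, (F u u' v v' + G u u' v v')
      = (∑ u : Fin n, ∑ u' : Fin n, ∑ v : Fin n, ∑ v' : Fin n, F u u' v v')
        + ∑ u : Fin n, ∑ u' : Fin n, ∑ v : Fin n, ∑ v' : Fin n, G u u' v v' := by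
    intro F G
    simp [Finset.sum_add_distrib]
  have helperC : ∀ (C : ℚ) (F : Fin n → Fin n → Fin n → Fin n → ℚ),
      ∑ u : Fin n, ∑ u' : Fin n, ∑ v : Fin n, ∑ v' : Fin n, C * F u u' v v'
      = C * ∑ u : Fin n, ∑ u' : Fin n, ∑ v : Fin n, ∑ v' : Fin n, F u u' v v' := by
    intro C F
    rw [Finset.mul_sum]
    refine Finset.sum_congr rfl fun u _ => ?_
    rw [Finset.mul_sum]
    refine Finset.sum_congr rfl fun u' _ => ?_
    rw [Finset.mul_sum]
    refine Finset.sum_congr rfl fun v _ => ?_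
    rw [Finset.mul_sum]
  -- expansion of the square
  have hexp : ∀ π : Equiv.Perm (Fin n),
      (∑ u : Fin n, ∑ v : Fin n,
          if G.Adj u v then |((π u : ℕ):ℚ) - ((π v : ℕ):ℚ)| else 0)
        * (∑ u : Fin n, ∑ v : Fin n,
          if G.Adj u v then |((π u : ℕ):ℚ) - ((π v : ℕ):ℚ)| else 0)
      = ∑ u : Fin n, ∑ u' : Fin n, ∑ v : Fin n, ∑ v' : Fin n,
          (if G.Adj u v then |((π u : ℕ):ℚ) - ((π v : ℕ):ℚ)| else 0)
          * (if G.Adj u' v' then |((π u' : ℕ):ℚ) - ((π v' : ℕ):ℚ)| else 0) := by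
    intro π
    rw [Finset.sum_mul_sum]
    exact Finset.sum_congr rfl fun u _ => Finset.sum_congr rfl fun u' _ =>
      Finset.sum_mul_sum _ _ _ _
  have hpoint : ∀ u u' v v' : Fin n,
      ∑ π : Equiv.Perm (Fin n),
          (if G.Adj u v then |((π u : ℕ):ℚ) - ((π v : ℕ):ℚ)| else 0)
          * (if G.Adj u' v' then |((π u' : ℕ):ℚ) - ((π v' : ℕ):ℚ)| else 0)
      = (aQ u v * aQ u' v') * (((Nat.factorial n : ℕ) : ℚ) *
          (e0 + c1 * ((if u = u' then (1:ℚ) else 0) + (if u = v' then (1:ℚ) else 0)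
              + (if v = u' then (1:ℚ) else 0) + (if v = v' then (1:ℚ) else 0))
            + c2 * ((if u = u' ∧ v = v' then (1:ℚ) else 0)
              + (if u = v' ∧ v = u' then (1:ℚ) else 0)))) := by
    intro u u' v v'
    by_cases h : G.Adj u v
    · by_cases h' : G.Adj u' v'
      · rw [Finset.sum_congr rfl fun π _ => by rw [if_pos h, if_pos h'],
          hpp u v u' v' (G.ne_of_adj h) (G.ne_of_adj h'), haQ]
        simp only [if_pos h, if_pos h', one_mul]
      · rw [Finset.sum_congr rfl fun π _ => by rw [if_neg h', mul_zero],
          Finset.sum_const_zero, haQ]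
        simp [h']
    · rw [Finset.sum_congr rfl fun π _ => by rw [if_neg h, zero_mul],
        Finset.sum_const_zero, haQ]
      simp [h]
  have hdist : ∀ u u' v v' : Fin n,
      (aQ u v * aQ u' v') * (((Nat.factorial n : ℕ) : ℚ) *
          (e0 + c1 * ((if u = u' then (1:ℚ) else 0) + (if u = v' then (1:ℚ) else 0)
              + (if v = u' then (1:ℚ) else 0) + (if v = v' then (1:ℚ) else 0))
            + c2 * ((if u = u' ∧ v = v' then (1:ℚ) else 0)
              + (if u = v' ∧ v = u' then (1:ℚ) else 0))))
      = (((Nat.factorial n : ℕ) : ℚ) * e0) * (aQ u v * aQ u' v')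
        + ((((Nat.factorial n : ℕ) : ℚ) * c1) * ((aQ u v * aQ u' v') * (if u = u' then (1:ℚ) else 0))
          + (((Nat.factorial n : ℕ) : ℚ) * c1) * ((aQ u v * aQ u' v') * (if u = v' then (1:ℚ) else 0))
          + (((Nat.factorial n : ℕ) : ℚ) * c1) * ((aQ u v * aQ u' v') * (if v = u' then (1:ℚ) else 0))
          + (((Nat.factorial n : ℕ) : ℚ) * c1) * ((aQ u v * aQ u' v') * (if v = v' then (1:ℚ) else 0)))
        + ((((Nat.factorial n : ℕ) : ℚ) * c2) * ((aQ u v * aQ u' v') * (if u = u' ∧ v = v' then (1:ℚ) else 0))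
          + (((Nat.factorial n : ℕ) : ℚ) * c2) * ((aQ u v * aQ u' v') * (if u = v' ∧ v = u' then (1:ℚ) else 0))) :=
    fun u u' v v' => by ring
  calc ∑ π : Equiv.Perm (Fin n),
      (∑ u : Fin n, ∑ v : Fin n,
          if G.Adj u v then |((π u : ℕ):ℚ) - ((π v : ℕ):ℚ)| else 0)
        * (∑ u : Fin n, ∑ v : Fin n,
          if G.Adj u v then |((π u : ℕ):ℚ) - ((π v : ℕ):ℚ)| else 0)
      = ∑ π : Equiv.Perm (Fin n), ∑ u : Fin n, ∑ u' : Fin n, ∑ v : Fin n, ∑ v' : Fin n,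
          (if G.Adj u v then |((π u : ℕ):ℚ) - ((π v : ℕ):ℚ)| else 0)
          * (if G.Adj u' v' then |((π u' : ℕ):ℚ) - ((π v' : ℕ):ℚ)| else 0) :=
        Finset.sum_congr rfl fun π _ => hexp π
    _ = ∑ u : Fin n, ∑ u' : Fin n, ∑ v : Fin n, ∑ v' : Fin n, ∑ π : Equiv.Perm (Fin n),
          (if G.Adj u v then |((π u : ℕ):ℚ) - ((π v : ℕ):ℚ)| else 0)
          * (if G.Adj u' v' then |((π u' : ℕ):ℚ) - ((π v' : ℕ):ℚ)| else 0) := by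
        rw [Finset.sum_comm]
        refine Finset.sum_congr rfl fun u _ => ?_
        rw [Finset.sum_comm]
        refine Finset.sum_congr rfl fun u' _ => ?_
        rw [Finset.sum_comm]
        refine Finset.sum_congr rfl fun v _ => ?_
        rw [Finset.sum_comm]
    _ = ∑ u : Fin n, ∑ u' : Fin n, ∑ v : Fin n, ∑ v' : Fin n,
          (aQ u v * aQ u' v') * (((Nat.factorial n : ℕ) : ℚ) *
          (e0 + c1 * ((if u = u' then (1:ℚ) else 0) + (if u = v' then (1:ℚ) else 0)
              + (if v = u' then (1:ℚ) else 0) + (if v = v' then (1:ℚ) else 0))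
            + c2 * ((if u = u' ∧ v = v' then (1:ℚ) else 0)
              + (if u = v' ∧ v = u' then (1:ℚ) else 0)))) :=
        Finset.sum_congr rfl fun u _ => Finset.sum_congr rfl fun u' _ =>
          Finset.sum_congr rfl fun v _ => Finset.sum_congr rfl fun v' _ =>
            hpoint u u' v v'
    _ = _ := by
        rw [Finset.sum_congr rfl fun u _ => Finset.sum_congr rfl fun u' _ =>
          Finset.sum_congr rfl fun v _ => Finset.sum_congr rfl fun v' _ =>
            hdist u u' v v']
        rw [helperA, helperA, helperA, helperA, helperA, helperA,
          helperC, helperC, helperC, helperC, helperC, helperC, helperC,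
          hT0, hT1a, hT1b, hT1c, hT1d, hT2a, hT2b]
        ring

end SecondMomentAux

open SecondMomentAux in
/-- For a simple graph `G` on `n` vertices with `m` edges and sum of squared degrees
`K = Σ_i k_i^2`, the second moment of the sum of edge lengths `D` in a uniformly random
linear arrangement is `E[D^2] = ((n+1)/45)[m(m(5n+4) + 2(n-1)) + (n/4 - 1) K]`. -/
theorem second_moment_sum_edge_lengths (n : ℕ) (G : SimpleGraph (Fin n))
    [DecidableRel G.Adj] :
    (∑ π : Equiv.Perm (Fin n),
        ((∑ u : Fin n, ∑ v : Fin n,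
          if G.Adj u v then |((π u : ℕ) : ℚ) - ((π v : ℕ) : ℚ)| else 0) / 2) ^ 2)
      / (Nat.factorial n : ℚ)
      = (((n : ℚ) + 1) / 45) *
          ((G.edgeFinset.card : ℚ) * ((G.edgeFinset.card : ℚ) * (5 * (n : ℚ) + 4)
              + 2 * ((n : ℚ) - 1))
            + ((n : ℚ) / 4 - 1) * ∑ i : Fin n, (G.degree i : ℚ) ^ 2) := by
  have key := assembly G ((5*(n:ℚ)^2 + 9*(n:ℚ) + 4)/45)
    ((7*(n:ℚ)^2 + 11*(n:ℚ) + 4)/60 - (5*(n:ℚ)^2 + 9*(n:ℚ) + 4)/45)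
    (((n:ℚ)^2 + (n:ℚ))/6 - 2*((7*(n:ℚ)^2 + 11*(n:ℚ) + 4)/60)
        + (5*(n:ℚ)^2 + 9*(n:ℚ) + 4)/45)
    (fun u v u' v' huv huv' => perm_pointwise u v u' v' huv huv')
  have hsq : ∀ π : Equiv.Perm (Fin n),
      ((∑ u : Fin n, ∑ v : Fin n,
          if G.Adj u v then |((π u : ℕ) : ℚ) - ((π v : ℕ) : ℚ)| else 0) / 2) ^ 2
      = ((∑ u : Fin n, ∑ v : Fin n,
          if G.Adj u v then |((π u : ℕ) : ℚ) - ((π v : ℕ) : ℚ)| else 0)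
        * (∑ u : Fin n, ∑ v : Fin n,
          if G.Adj u v then |((π u : ℕ) : ℚ) - ((π v : ℕ) : ℚ)| else 0)) / 4 :=
    fun π => by ring
  rw [Finset.sum_congr rfl fun π _ => hsq π, ← Finset.sum_div, key]
  have hne : ((Nat.factorial n : ℕ) : ℚ) ≠ 0 :=
    Nat.cast_ne_zero.mpr (Nat.factorial_ne_zero n)
  field_simp
  ring
end

section
/- For a simple graph G with n vertices, m edges and sum of squared degrees K = Σ_i k_i^2, the variance of the sum of edge lengths D in a uniformly random linear arrangement is V[D] = ((n+1)/45)[m(2(n-1) - m) + (n/4 - 1) K]. -/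
open Finset

def dq {n : ℕ} (a b : Fin n) : ℚ := |((a : ℕ) : ℚ) - ((b : ℕ) : ℚ)|

lemma dq_self {n : ℕ} (a : Fin n) : dq a a = 0 := by simp [dq]

lemma dq_comm {n : ℕ} (a b : Fin n) : dq a b = dq b a := abs_sub_comm _ _

lemma quartic_sum (n : ℕ) (f : ℕ → ℚ) (c0 c1 c2 c3 c4 : ℚ)
    (h : ∀ i : ℕ, f i = c0 + c1*i + c2*(i:ℚ)^2 + c3*(i:ℚ)^3 + c4*(i:ℚ)^4) :
    ∑ i ∈ Finset.range n, f i
      = c0*n + c1*((n:ℚ)^2-n)/2 + c2*(2*(n:ℚ)^3-3*(n:ℚ)^2+n)/6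
        + c3*((n:ℚ)^4-2*(n:ℚ)^3+(n:ℚ)^2)/4
        + c4*(6*(n:ℚ)^5-15*(n:ℚ)^4+10*(n:ℚ)^3-(n:ℚ))/30 := by
  induction n with
  | zero => simp
  | succ n ih => rw [Finset.sum_range_succ, ih, h n]; push_cast; ring

lemma row_aux : ∀ (N a : ℕ), a < N →
    ∑ b ∈ Finset.range N, |(a:ℚ) - (b:ℚ)|
      = ((a:ℚ)*((a:ℚ)+1) + ((N:ℚ)-1-(a:ℚ))*((N:ℚ)-(a:ℚ)))/2 := by
  intro N
  induction N with
  | zero => omega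
  | succ N ih =>
    intro a ha
    rw [Finset.sum_range_succ]
    rcases Nat.lt_or_ge a N with h | h
    · have hc : (a:ℚ) ≤ (N:ℚ) := by exact_mod_cast h.le
      rw [ih a h, abs_of_nonpos (by linarith)]
      push_cast; ring
    · have : a = N := by omega
      subst this
      have h1 : ∑ b ∈ Finset.range a, |(a:ℚ) - (b:ℚ)| = ∑ b ∈ Finset.range a, ((a:ℚ) - (b:ℚ)) := by
        refine Finset.sum_congr rfl fun b hb => ?_
        have : (b:ℚ) ≤ (a:ℚ) := by exact_mod_cast (Finset.mem_range.1 hb).le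
        exact abs_of_nonneg (by linarith)
      have h2 : ∑ b ∈ Finset.range a, ((a:ℚ) - (b:ℚ))
          = (a:ℚ)*a - ((a:ℚ)^2 - a)/2 := by
        rw [Finset.sum_sub_distrib, Finset.sum_const, Finset.card_range]
        have := quartic_sum a (fun i => (i:ℚ)) 0 1 0 0 0 (by intro i; push_cast; ring)
        rw [this]; push_cast; ring
      rw [h1, h2]
      push_cast; simp; ring


lemma row {n : ℕ} (a : Fin n) :
    ∑ b : Fin n, dq a b
      = (((a:ℕ):ℚ)*(((a:ℕ):ℚ)+1) + ((n:ℚ)-1-((a:ℕ):ℚ))*((n:ℚ)-((a:ℕ):ℚ)))/2 := by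
  have : ∑ b : Fin n, dq a b = ∑ b ∈ Finset.range n, |((a:ℕ):ℚ) - (b:ℚ)| :=
    Fin.sum_univ_eq_sum_range (fun b => |((a:ℕ):ℚ) - (b:ℚ)|) n
  rw [this, row_aux n a a.isLt]

lemma sum_dq (n : ℕ) : ∑ a : Fin n, ∑ b : Fin n, dq a b = ((n:ℚ)^3 - n)/3 := by
  have h1 : ∀ a : Fin n, ∑ b : Fin n, dq a b
      = (fun i : ℕ => (((i:ℚ)*((i:ℚ)+1) + ((n:ℚ)-1-(i:ℚ))*((n:ℚ)-(i:ℚ)))/2)) (a : ℕ) :=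
    fun a => row a
  rw [Finset.sum_congr rfl fun a _ => h1 a,
    Fin.sum_univ_eq_sum_range (fun i : ℕ => (((i:ℚ)*((i:ℚ)+1) + ((n:ℚ)-1-(i:ℚ))*((n:ℚ)-(i:ℚ)))/2)) n,
    quartic_sum n _ (((n:ℚ)^2-n)/2) (1-(n:ℚ)) 1 0 0 (by intro i; push_cast; ring)]
  ring

lemma sum_row_sq (n : ℕ) :
    ∑ a : Fin n, (∑ b : Fin n, dq a b) * (∑ b : Fin n, dq a b)
      = (7*(n:ℚ)^5 - 15*(n:ℚ)^3 + 8*(n:ℚ))/60 := by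
  have h1 : ∀ a : Fin n, (∑ b : Fin n, dq a b) * (∑ b : Fin n, dq a b)
      = (fun i : ℕ => ((((i:ℚ)*((i:ℚ)+1) + ((n:ℚ)-1-(i:ℚ))*((n:ℚ)-(i:ℚ)))/2)
          * (((i:ℚ)*((i:ℚ)+1) + ((n:ℚ)-1-(i:ℚ))*((n:ℚ)-(i:ℚ)))/2))) (a:ℕ) := by
    intro a; rw [row]
  rw [Finset.sum_congr rfl fun a _ => h1 a,
    Fin.sum_univ_eq_sum_range (fun i : ℕ => ((((i:ℚ)*((i:ℚ)+1) + ((n:ℚ)-1-(i:ℚ))*((n:ℚ)-(i:ℚ)))/2)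
          * (((i:ℚ)*((i:ℚ)+1) + ((n:ℚ)-1-(i:ℚ))*((n:ℚ)-(i:ℚ)))/2))) n,
    quartic_sum n _ (((n:ℚ)^2-n)*((n:ℚ)^2-n)/4) (-(n:ℚ)^3+2*(n:ℚ)^2-(n:ℚ))
      (2*(n:ℚ)^2-3*(n:ℚ)+1) (2*(1-(n:ℚ))) 1 (by intro i; push_cast; ring)]
  ring

lemma sum_dq_sq (n : ℕ) :
    ∑ a : Fin n, ∑ b : Fin n, dq a b * dq a b = ((n:ℚ)^4 - (n:ℚ)^2)/6 := by
  have key : ∀ a : Fin n, ∑ b : Fin n, dq a b * dq a b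
      = (fun i : ℕ => ((n:ℚ)*(i:ℚ)^2 - ((n:ℚ)^2-(n:ℚ))*(i:ℚ) + (2*(n:ℚ)^3-3*(n:ℚ)^2+(n:ℚ))/6)) (a:ℕ) := by
    intro a
    have h2 : ∀ b : Fin n, dq a b * dq a b = (((a:ℕ):ℚ) - ((b:ℕ):ℚ))^2 := by
      intro b; rw [dq, ← abs_mul, ← sq]; exact abs_sq _
    rw [Finset.sum_congr rfl fun b _ => h2 b,
      Fin.sum_univ_eq_sum_range (fun i : ℕ => (((a:ℕ):ℚ) - (i:ℚ))^2) n,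
      quartic_sum n _ (((a:ℕ):ℚ)^2) (-2*((a:ℕ):ℚ)) 1 0 0 (by intro i; push_cast; ring)]
    ring
  rw [Finset.sum_congr rfl fun a _ => key a,
    Fin.sum_univ_eq_sum_range (fun i : ℕ => ((n:ℚ)*(i:ℚ)^2 - ((n:ℚ)^2-(n:ℚ))*(i:ℚ) + (2*(n:ℚ)^3-3*(n:ℚ)^2+(n:ℚ))/6)) n,
    quartic_sum n _ ((2*(n:ℚ)^3-3*(n:ℚ)^2+(n:ℚ))/6) (-((n:ℚ)^2-(n:ℚ))) (n:ℚ) 0 0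
      (by intro i; push_cast; ring)]
  ring


lemma exists_perm_list {α : Type*} [DecidableEq α] :
    ∀ l₁ l₂ : List α, l₁.Nodup → l₂.Nodup → l₁.length = l₂.length →
      ∃ σ : Equiv.Perm α, ∀ p ∈ l₁.zip l₂, σ p.1 = p.2 := by
  intro l₁
  induction l₁ with
  | nil => intro l₂ _ _ _; exact ⟨1, by simp⟩
  | cons u t ih =>
    intro l₂ h1 h2 hlen
    cases l₂ with
    | nil => simp at hlen
    | cons a s =>
      obtain ⟨σ, hσ⟩ := ih s (List.nodup_cons.1 h1).2 (List.nodup_cons.1 h2).2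
        (by simpa using hlen)
      refine ⟨(Equiv.swap (σ u) a) * σ, ?_⟩
      intro p hp
      rcases List.mem_cons.1 hp with h | h
      · subst h; simp [Equiv.Perm.mul_apply]
      · obtain ⟨x, y⟩ := p
        have h3 : σ x = y := hσ (x, y) h
        have hxy := List.of_mem_zip h
        have hy1 : y ≠ a := by
          intro hc; exact (List.nodup_cons.1 h2).1 (hc ▸ hxy.2)
        have hy2 : y ≠ σ u := by
          intro hc
          have : x = u := σ.injective (h3.trans hc)
          exact (List.nodup_cons.1 h1).1 (this ▸ hxy.1)
        simp [Equiv.Perm.mul_apply, h3, Equiv.swap_apply_of_ne_of_ne hy2 hy1]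

lemma exists_perm2 {n : ℕ} {u v a b : Fin n} (h : u ≠ v) (h2 : a ≠ b) :
    ∃ σ : Equiv.Perm (Fin n), σ u = a ∧ σ v = b := by
  obtain ⟨σ, hσ⟩ := exists_perm_list [u, v] [a, b] (by simp [h]) (by simp [h2]) rfl
  exact ⟨σ, hσ (u, a) (by simp), hσ (v, b) (by simp)⟩

lemma exists_perm3 {n : ℕ} {u v w a b c : Fin n}
    (h1 : u ≠ v) (h2 : u ≠ w) (h3 : v ≠ w) (g1 : a ≠ b) (g2 : a ≠ c) (g3 : b ≠ c) :
    ∃ σ : Equiv.Perm (Fin n), σ u = a ∧ σ v = b ∧ σ w = c := by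
  obtain ⟨σ, hσ⟩ := exists_perm_list [u, v, w] [a, b, c]
    (by simp [h1, h2, h3]) (by simp [g1, g2, g3]) rfl
  exact ⟨σ, hσ (u, a) (by simp), hσ (v, b) (by simp), hσ (w, c) (by simp)⟩

lemma exists_perm4 {n : ℕ} {u v w x a b c e : Fin n}
    (h1 : u ≠ v) (h2 : u ≠ w) (h3 : u ≠ x) (h4 : v ≠ w) (h5 : v ≠ x) (h6 : w ≠ x)
    (g1 : a ≠ b) (g2 : a ≠ c) (g3 : a ≠ e) (g4 : b ≠ c) (g5 : b ≠ e) (g6 : c ≠ e) :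
    ∃ σ : Equiv.Perm (Fin n), σ u = a ∧ σ v = b ∧ σ w = c ∧ σ x = e := by
  obtain ⟨σ, hσ⟩ := exists_perm_list [u, v, w, x] [a, b, c, e]
    (by simp [h1, h2, h3, h4, h5, h6]) (by simp [g1, g2, g3, g4, g5, g6]) rfl
  exact ⟨σ, hσ (u, a) (by simp), hσ (v, b) (by simp), hσ (w, c) (by simp),
    hσ (x, e) (by simp)⟩


lemma inj2_one (n : ℕ) :
    ∑ a : Fin n, ∑ b : Fin n, (if a ≠ b then (1:ℚ) else 0) = (n:ℚ)^2 - n := by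
  have h : ∀ a b : Fin n, (if a ≠ b then (1:ℚ) else 0) = 1 - (if a = b then (1:ℚ) else 0) := by
    intro a b; split_ifs <;> simp_all
  simp only [h, Finset.sum_sub_distrib, Finset.sum_const, Finset.card_univ, Fintype.card_fin]
  simp [Finset.sum_ite_eq]
  ring

lemma inj3_one (n : ℕ) :
    ∑ a : Fin n, ∑ b : Fin n, ∑ c : Fin n,
      (if a ≠ b ∧ a ≠ c ∧ b ≠ c then (1:ℚ) else 0) = (n:ℚ)^3 - 3*(n:ℚ)^2 + 2*(n:ℚ) := by
  have h : ∀ a b c : Fin n, (if a ≠ b ∧ a ≠ c ∧ b ≠ c then (1:ℚ) else 0)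
      = (if a ≠ b then (1:ℚ) else 0) *
        (1 - (if a = c then (1:ℚ) else 0) - (if b = c then (1:ℚ) else 0)) := by
    intro a b c
    by_cases h1 : a = b
    · subst h1; simp
    · by_cases h2 : a = c
      · subst h2; simp [h1, Ne.symm h1]
      · by_cases h3 : b = c
        · subst h3; simp [h1, h2]
        · simp [h1, h2, h3]
  simp only [h]
  have hin : ∀ a b : Fin n,
      ∑ c : Fin n, ((if a ≠ b then (1:ℚ) else 0) *
        (1 - (if a = c then (1:ℚ) else 0) - (if b = c then (1:ℚ) else 0)))
      = (if a ≠ b then (1:ℚ) else 0) * ((n:ℚ) - 2) := by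
    intro a b
    rw [← Finset.mul_sum]
    congr 1
    simp only [Finset.sum_sub_distrib, Finset.sum_const, Finset.card_univ, Fintype.card_fin]
    simp [Finset.sum_ite_eq]
    ring
  simp only [hin, ← Finset.sum_mul]
  rw [inj2_one]
  ring

lemma inj4_one (n : ℕ) :
    ∑ a : Fin n, ∑ b : Fin n, ∑ c : Fin n, ∑ e : Fin n,
      (if a ≠ b ∧ a ≠ c ∧ a ≠ e ∧ b ≠ c ∧ b ≠ e ∧ c ≠ e then (1:ℚ) else 0)
      = (n:ℚ)^4 - 6*(n:ℚ)^3 + 11*(n:ℚ)^2 - 6*(n:ℚ) := by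
  have h : ∀ a b c e : Fin n,
      (if a ≠ b ∧ a ≠ c ∧ a ≠ e ∧ b ≠ c ∧ b ≠ e ∧ c ≠ e then (1:ℚ) else 0)
      = (if a ≠ b ∧ a ≠ c ∧ b ≠ c then (1:ℚ) else 0) *
        (1 - (if a = e then (1:ℚ) else 0) - (if b = e then (1:ℚ) else 0)
           - (if c = e then (1:ℚ) else 0)) := by
    intro a b c e
    by_cases h1 : a = b
    · simp [h1]
    by_cases h2 : a = c
    · simp [h2]
    by_cases h3 : b = c
    · simp [h3]
    by_cases h4 : a = e
    · subst h4; simp [h1, h2, h3, Ne.symm h1, Ne.symm h2]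
    by_cases h5 : b = e
    · subst h5; simp [h1, h2, h3, h4, Ne.symm h3]
    by_cases h6 : c = e
    · subst h6; simp [h1, h2, h3, h4, h5]
    · simp [h1, h2, h3, h4, h5, h6]
  simp only [h]
  have hin : ∀ a b c : Fin n,
      ∑ e : Fin n, ((if a ≠ b ∧ a ≠ c ∧ b ≠ c then (1:ℚ) else 0) *
        (1 - (if a = e then (1:ℚ) else 0) - (if b = e then (1:ℚ) else 0)
           - (if c = e then (1:ℚ) else 0)))
      = (if a ≠ b ∧ a ≠ c ∧ b ≠ c then (1:ℚ) else 0) * ((n:ℚ) - 3) := by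
    intro a b c
    rw [← Finset.mul_sum]
    congr 1
    simp only [Finset.sum_sub_distrib, Finset.sum_const, Finset.card_univ, Fintype.card_fin]
    simp [Finset.sum_ite_eq]
    ring
  simp only [hin, ← Finset.sum_mul]
  rw [inj3_one]
  ring


lemma orbit2 {n : ℕ} (φ : Fin n → Fin n → ℚ) (u v : Fin n) (h : u ≠ v) :
    ((n:ℚ)^2 - n) * ∑ π : Equiv.Perm (Fin n), φ (π u) (π v)
      = (Nat.factorial n : ℚ) * ∑ a : Fin n, ∑ b : Fin n, if a ≠ b then φ a b else 0 := by
  have key : ∀ a b : Fin n, a ≠ b →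
      ∑ π : Equiv.Perm (Fin n), φ (π a) (π b)
        = ∑ π : Equiv.Perm (Fin n), φ (π u) (π v) := by
    intro a b hab
    obtain ⟨σ, h1, h2⟩ := exists_perm2 h hab
    calc ∑ π : Equiv.Perm (Fin n), φ (π a) (π b)
        = ∑ π : Equiv.Perm (Fin n), φ ((π * σ) u) ((π * σ) v) := by
          simp only [Equiv.Perm.mul_apply, h1, h2]
      _ = ∑ π : Equiv.Perm (Fin n), φ (π u) (π v) :=
          Fintype.sum_equiv (Equiv.mulRight σ) _ _ (fun π => rfl)
  have swap1 : ∀ π : Equiv.Perm (Fin n),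
      (∑ a : Fin n, ∑ b : Fin n, if a ≠ b then φ (π a) (π b) else 0)
        = ∑ a : Fin n, ∑ b : Fin n, if a ≠ b then φ a b else 0 := by
    intro π
    refine Fintype.sum_equiv π _ _ (fun a => ?_)
    refine Fintype.sum_equiv π _ _ (fun b => ?_)
    by_cases hab : a = b
    · simp [hab]
    · rw [if_pos hab, if_pos (fun hc => hab (π.injective hc))]
  calc ((n:ℚ)^2 - n) * ∑ π : Equiv.Perm (Fin n), φ (π u) (π v)
      = ∑ a : Fin n, ∑ b : Fin n,
          (if a ≠ b then (∑ π : Equiv.Perm (Fin n), φ (π a) (π b)) else 0) := by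
        rw [← inj2_one n, Finset.sum_mul]
        refine Finset.sum_congr rfl fun a _ => ?_
        rw [Finset.sum_mul]
        refine Finset.sum_congr rfl fun b _ => ?_
        by_cases hab : a ≠ b
        · rw [if_pos hab, if_pos hab, one_mul, key a b hab]
        · rw [if_neg hab, if_neg hab, zero_mul]
    _ = ∑ a : Fin n, ∑ b : Fin n, ∑ π : Equiv.Perm (Fin n),
          (if a ≠ b then φ (π a) (π b) else 0) := by
        refine Finset.sum_congr rfl fun a _ => Finset.sum_congr rfl fun b _ => ?_
        split_ifs
        · rfl
        · simp
    _ = ∑ π : Equiv.Perm (Fin n), ∑ a : Fin n, ∑ b : Fin n,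
          (if a ≠ b then φ (π a) (π b) else 0) := by
        rw [show (∑ a : Fin n, ∑ b : Fin n, ∑ π : Equiv.Perm (Fin n),
            (if a ≠ b then φ (π a) (π b) else 0))
            = ∑ a : Fin n, ∑ π : Equiv.Perm (Fin n), ∑ b : Fin n,
            (if a ≠ b then φ (π a) (π b) else 0) from
          Finset.sum_congr rfl fun a _ => Finset.sum_comm]
        exact Finset.sum_comm
    _ = ∑ π : Equiv.Perm (Fin n), ∑ a : Fin n, ∑ b : Fin n,
          (if a ≠ b then φ a b else 0) := Finset.sum_congr rfl fun π _ => swap1 π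
    _ = (Nat.factorial n : ℚ) * ∑ a : Fin n, ∑ b : Fin n, (if a ≠ b then φ a b else 0) := by
        rw [Finset.sum_const, Finset.card_univ, Fintype.card_perm, Fintype.card_fin,
          nsmul_eq_mul]


lemma orbit3 {n : ℕ} (φ : Fin n → Fin n → Fin n → ℚ) (u v w : Fin n)
    (h1 : u ≠ v) (h2 : u ≠ w) (h3 : v ≠ w) :
    ((n:ℚ)^3 - 3*(n:ℚ)^2 + 2*(n:ℚ)) * ∑ π : Equiv.Perm (Fin n), φ (π u) (π v) (π w)
      = (Nat.factorial n : ℚ) * ∑ a : Fin n, ∑ b : Fin n, ∑ c : Fin n,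
          if a ≠ b ∧ a ≠ c ∧ b ≠ c then φ a b c else 0 := by
  have key : ∀ a b c : Fin n, a ≠ b → a ≠ c → b ≠ c →
      ∑ π : Equiv.Perm (Fin n), φ (π a) (π b) (π c)
        = ∑ π : Equiv.Perm (Fin n), φ (π u) (π v) (π w) := by
    intro a b c g1 g2 g3
    obtain ⟨σ, e1, e2, e3⟩ := exists_perm3 h1 h2 h3 g1 g2 g3
    calc ∑ π : Equiv.Perm (Fin n), φ (π a) (π b) (π c)
        = ∑ π : Equiv.Perm (Fin n), φ ((π * σ) u) ((π * σ) v) ((π * σ) w) := by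
          simp only [Equiv.Perm.mul_apply, e1, e2, e3]
      _ = ∑ π : Equiv.Perm (Fin n), φ (π u) (π v) (π w) :=
          Fintype.sum_equiv (Equiv.mulRight σ) _ _ (fun π => rfl)
  have swap1 : ∀ π : Equiv.Perm (Fin n),
      (∑ a : Fin n, ∑ b : Fin n, ∑ c : Fin n,
        if a ≠ b ∧ a ≠ c ∧ b ≠ c then φ (π a) (π b) (π c) else 0)
      = ∑ a : Fin n, ∑ b : Fin n, ∑ c : Fin n,
          if a ≠ b ∧ a ≠ c ∧ b ≠ c then φ a b c else 0 := by
    intro π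
    refine Fintype.sum_equiv π _ _ (fun a => ?_)
    refine Fintype.sum_equiv π _ _ (fun b => ?_)
    refine Fintype.sum_equiv π _ _ (fun c => ?_)
    by_cases hab : a ≠ b ∧ a ≠ c ∧ b ≠ c
    · rw [if_pos hab, if_pos ⟨fun hc => hab.1 (π.injective hc),
        fun hc => hab.2.1 (π.injective hc), fun hc => hab.2.2 (π.injective hc)⟩]
    · rw [if_neg hab, if_neg (fun hc => hab
        ⟨fun e => hc.1 (e ▸ rfl), fun e => hc.2.1 (e ▸ rfl), fun e => hc.2.2 (e ▸ rfl)⟩)]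
  calc ((n:ℚ)^3 - 3*(n:ℚ)^2 + 2*(n:ℚ)) * ∑ π : Equiv.Perm (Fin n), φ (π u) (π v) (π w)
      = ∑ a : Fin n, ∑ b : Fin n, ∑ c : Fin n,
          (if a ≠ b ∧ a ≠ c ∧ b ≠ c then (∑ π : Equiv.Perm (Fin n), φ (π a) (π b) (π c))
            else 0) := by
        rw [← inj3_one n, Finset.sum_mul]
        refine Finset.sum_congr rfl fun a _ => ?_
        rw [Finset.sum_mul]
        refine Finset.sum_congr rfl fun b _ => ?_
        rw [Finset.sum_mul]
        refine Finset.sum_congr rfl fun c _ => ?_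
        by_cases hab : a ≠ b ∧ a ≠ c ∧ b ≠ c
        · rw [if_pos hab, if_pos hab, one_mul, key a b c hab.1 hab.2.1 hab.2.2]
        · rw [if_neg hab, if_neg hab, zero_mul]
    _ = ∑ a : Fin n, ∑ b : Fin n, ∑ c : Fin n, ∑ π : Equiv.Perm (Fin n),
          (if a ≠ b ∧ a ≠ c ∧ b ≠ c then φ (π a) (π b) (π c) else 0) := by
        refine Finset.sum_congr rfl fun a _ => Finset.sum_congr rfl fun b _ =>
          Finset.sum_congr rfl fun c _ => ?_
        split_ifs
        · rfl
        · simp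
    _ = ∑ π : Equiv.Perm (Fin n), ∑ a : Fin n, ∑ b : Fin n, ∑ c : Fin n,
          (if a ≠ b ∧ a ≠ c ∧ b ≠ c then φ (π a) (π b) (π c) else 0) := by
        rw [show (∑ a : Fin n, ∑ b : Fin n, ∑ c : Fin n, ∑ π : Equiv.Perm (Fin n),
            (if a ≠ b ∧ a ≠ c ∧ b ≠ c then φ (π a) (π b) (π c) else 0))
            = ∑ a : Fin n, ∑ π : Equiv.Perm (Fin n), ∑ b : Fin n, ∑ c : Fin n,
            (if a ≠ b ∧ a ≠ c ∧ b ≠ c then φ (π a) (π b) (π c) else 0) from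
          Finset.sum_congr rfl fun a _ => by
            rw [show (∑ b : Fin n, ∑ c : Fin n, ∑ π : Equiv.Perm (Fin n),
                (if a ≠ b ∧ a ≠ c ∧ b ≠ c then φ (π a) (π b) (π c) else 0))
                = ∑ b : Fin n, ∑ π : Equiv.Perm (Fin n), ∑ c : Fin n,
                (if a ≠ b ∧ a ≠ c ∧ b ≠ c then φ (π a) (π b) (π c) else 0) from
              Finset.sum_congr rfl fun b _ => Finset.sum_comm]
            exact Finset.sum_comm]
        exact Finset.sum_comm
    _ = ∑ π : Equiv.Perm (Fin n), ∑ a : Fin n, ∑ b : Fin n, ∑ c : Fin n,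
          (if a ≠ b ∧ a ≠ c ∧ b ≠ c then φ a b c else 0) :=
        Finset.sum_congr rfl fun π _ => swap1 π
    _ = (Nat.factorial n : ℚ) * ∑ a : Fin n, ∑ b : Fin n, ∑ c : Fin n,
          (if a ≠ b ∧ a ≠ c ∧ b ≠ c then φ a b c else 0) := by
        rw [Finset.sum_const, Finset.card_univ, Fintype.card_perm, Fintype.card_fin,
          nsmul_eq_mul]


lemma orbit4 {n : ℕ} (φ : Fin n → Fin n → Fin n → Fin n → ℚ) (u v w x : Fin n)
    (h1 : u ≠ v) (h2 : u ≠ w) (h3 : u ≠ x) (h4 : v ≠ w) (h5 : v ≠ x) (h6 : w ≠ x) :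
    ((n:ℚ)^4 - 6*(n:ℚ)^3 + 11*(n:ℚ)^2 - 6*(n:ℚ))
        * ∑ π : Equiv.Perm (Fin n), φ (π u) (π v) (π w) (π x)
      = (Nat.factorial n : ℚ) * ∑ a : Fin n, ∑ b : Fin n, ∑ c : Fin n, ∑ e : Fin n,
          if a ≠ b ∧ a ≠ c ∧ a ≠ e ∧ b ≠ c ∧ b ≠ e ∧ c ≠ e then φ a b c e else 0 := by
  have key : ∀ a b c e : Fin n, (a ≠ b ∧ a ≠ c ∧ a ≠ e ∧ b ≠ c ∧ b ≠ e ∧ c ≠ e) →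
      ∑ π : Equiv.Perm (Fin n), φ (π a) (π b) (π c) (π e)
        = ∑ π : Equiv.Perm (Fin n), φ (π u) (π v) (π w) (π x) := by
    intro a b c e hg
    obtain ⟨σ, e1, e2, e3, e4⟩ := exists_perm4 h1 h2 h3 h4 h5 h6
      hg.1 hg.2.1 hg.2.2.1 hg.2.2.2.1 hg.2.2.2.2.1 hg.2.2.2.2.2
    calc ∑ π : Equiv.Perm (Fin n), φ (π a) (π b) (π c) (π e)
        = ∑ π : Equiv.Perm (Fin n), φ ((π * σ) u) ((π * σ) v) ((π * σ) w) ((π * σ) x) := by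
          simp only [Equiv.Perm.mul_apply, e1, e2, e3, e4]
      _ = ∑ π : Equiv.Perm (Fin n), φ (π u) (π v) (π w) (π x) :=
          Fintype.sum_equiv (Equiv.mulRight σ) _ _ (fun π => rfl)
  have swap1 : ∀ π : Equiv.Perm (Fin n),
      (∑ a : Fin n, ∑ b : Fin n, ∑ c : Fin n, ∑ e : Fin n,
        if a ≠ b ∧ a ≠ c ∧ a ≠ e ∧ b ≠ c ∧ b ≠ e ∧ c ≠ e
          then φ (π a) (π b) (π c) (π e) else 0)
      = ∑ a : Fin n, ∑ b : Fin n, ∑ c : Fin n, ∑ e : Fin n,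
          if a ≠ b ∧ a ≠ c ∧ a ≠ e ∧ b ≠ c ∧ b ≠ e ∧ c ≠ e then φ a b c e else 0 := by
    intro π
    refine Fintype.sum_equiv π _ _ (fun a => ?_)
    refine Fintype.sum_equiv π _ _ (fun b => ?_)
    refine Fintype.sum_equiv π _ _ (fun c => ?_)
    refine Fintype.sum_equiv π _ _ (fun e => ?_)
    exact if_congr (by simp) rfl rfl
  calc ((n:ℚ)^4 - 6*(n:ℚ)^3 + 11*(n:ℚ)^2 - 6*(n:ℚ))
        * ∑ π : Equiv.Perm (Fin n), φ (π u) (π v) (π w) (π x)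
      = ∑ a : Fin n, ∑ b : Fin n, ∑ c : Fin n, ∑ e : Fin n,
          (if a ≠ b ∧ a ≠ c ∧ a ≠ e ∧ b ≠ c ∧ b ≠ e ∧ c ≠ e
            then (∑ π : Equiv.Perm (Fin n), φ (π a) (π b) (π c) (π e)) else 0) := by
        rw [← inj4_one n, Finset.sum_mul]
        refine Finset.sum_congr rfl fun a _ => ?_
        rw [Finset.sum_mul]
        refine Finset.sum_congr rfl fun b _ => ?_
        rw [Finset.sum_mul]
        refine Finset.sum_congr rfl fun c _ => ?_
        rw [Finset.sum_mul]
        refine Finset.sum_congr rfl fun e _ => ?_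
        by_cases hab : a ≠ b ∧ a ≠ c ∧ a ≠ e ∧ b ≠ c ∧ b ≠ e ∧ c ≠ e
        · rw [if_pos hab, if_pos hab, one_mul, key a b c e hab]
        · rw [if_neg hab, if_neg hab, zero_mul]
    _ = ∑ a : Fin n, ∑ b : Fin n, ∑ c : Fin n, ∑ e : Fin n, ∑ π : Equiv.Perm (Fin n),
          (if a ≠ b ∧ a ≠ c ∧ a ≠ e ∧ b ≠ c ∧ b ≠ e ∧ c ≠ e
            then φ (π a) (π b) (π c) (π e) else 0) := by
        refine Finset.sum_congr rfl fun a _ => Finset.sum_congr rfl fun b _ =>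
          Finset.sum_congr rfl fun c _ => Finset.sum_congr rfl fun e _ => ?_
        split_ifs
        · rfl
        · simp
    _ = ∑ π : Equiv.Perm (Fin n), ∑ a : Fin n, ∑ b : Fin n, ∑ c : Fin n, ∑ e : Fin n,
          (if a ≠ b ∧ a ≠ c ∧ a ≠ e ∧ b ≠ c ∧ b ≠ e ∧ c ≠ e
            then φ (π a) (π b) (π c) (π e) else 0) := by
        have s1 : ∀ (f : Fin n → Fin n → Equiv.Perm (Fin n) → ℚ),
            (∑ c' : Fin n, ∑ e' : Fin n, ∑ π : Equiv.Perm (Fin n), f c' e' π)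
              = ∑ π : Equiv.Perm (Fin n), ∑ c' : Fin n, ∑ e' : Fin n, f c' e' π := by
          intro f
          rw [show (∑ c' : Fin n, ∑ e' : Fin n, ∑ π : Equiv.Perm (Fin n), f c' e' π)
              = ∑ c' : Fin n, ∑ π : Equiv.Perm (Fin n), ∑ e' : Fin n, f c' e' π from
            Finset.sum_congr rfl fun c' _ => Finset.sum_comm]
          exact Finset.sum_comm
        rw [show (∑ a : Fin n, ∑ b : Fin n, ∑ c : Fin n, ∑ e : Fin n,
            ∑ π : Equiv.Perm (Fin n),
            (if a ≠ b ∧ a ≠ c ∧ a ≠ e ∧ b ≠ c ∧ b ≠ e ∧ c ≠ e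
              then φ (π a) (π b) (π c) (π e) else 0))
            = ∑ a : Fin n, ∑ b : Fin n, ∑ π : Equiv.Perm (Fin n), ∑ c : Fin n, ∑ e : Fin n,
            (if a ≠ b ∧ a ≠ c ∧ a ≠ e ∧ b ≠ c ∧ b ≠ e ∧ c ≠ e
              then φ (π a) (π b) (π c) (π e) else 0) from
          Finset.sum_congr rfl fun a _ => Finset.sum_congr rfl fun b _ => s1 _]
        exact s1 _
    _ = ∑ π : Equiv.Perm (Fin n), ∑ a : Fin n, ∑ b : Fin n, ∑ c : Fin n, ∑ e : Fin n,
          (if a ≠ b ∧ a ≠ c ∧ a ≠ e ∧ b ≠ c ∧ b ≠ e ∧ c ≠ e then φ a b c e else 0) :=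
        Finset.sum_congr rfl fun π _ => swap1 π
    _ = (Nat.factorial n : ℚ) * ∑ a : Fin n, ∑ b : Fin n, ∑ c : Fin n, ∑ e : Fin n,
          (if a ≠ b ∧ a ≠ c ∧ a ≠ e ∧ b ≠ c ∧ b ≠ e ∧ c ≠ e then φ a b c e else 0) := by
        rw [Finset.sum_const, Finset.card_univ, Fintype.card_perm, Fintype.card_fin,
          nsmul_eq_mul]


lemma col (n : ℕ) (b : Fin n) : ∑ a : Fin n, dq a b = ∑ a : Fin n, dq b a :=
  Finset.sum_congr rfl fun a _ => dq_comm a b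

lemma sum_col_sq (n : ℕ) :
    ∑ b : Fin n, (∑ a : Fin n, dq a b) * (∑ a : Fin n, dq a b)
      = (7*(n:ℚ)^5 - 15*(n:ℚ)^3 + 8*(n:ℚ))/60 := by
  rw [Finset.sum_congr rfl fun b _ => by rw [col n b]]
  exact sum_row_sq n

/-- The common value of the four "shared vertex" injective triple sums. -/
def T3v (n : ℕ) : ℚ := (7*(n:ℚ)^5 - 15*(n:ℚ)^3 + 8*(n:ℚ))/60 - ((n:ℚ)^4 - (n:ℚ)^2)/6

lemma inj3A (n : ℕ) :
    ∑ a : Fin n, ∑ b : Fin n, ∑ c : Fin n,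
      (if a ≠ b ∧ a ≠ c ∧ b ≠ c then dq a b * dq a c else 0) = T3v n := by
  have pt : ∀ a b c : Fin n,
      (if a ≠ b ∧ a ≠ c ∧ b ≠ c then dq a b * dq a c else 0)
      = dq a b * dq a c - (if b = c then dq a b * dq a c else 0) := by
    intro a b c
    rcases eq_or_ne a b with rfl | hab
    · simp [dq_self]
    rcases eq_or_ne a c with rfl | hac
    · simp [dq_self]
    rcases eq_or_ne b c with rfl | hbc
    · simp [hab]
    · simp [hab, hac, hbc]
  simp only [pt, Finset.sum_sub_distrib]
  have h1 : ∀ a : Fin n, ∑ b : Fin n, ∑ c : Fin n, dq a b * dq a c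
      = (∑ b : Fin n, dq a b) * (∑ b : Fin n, dq a b) := by
    intro a; rw [Finset.sum_mul_sum]
  have h2 : ∀ (a b : Fin n), (∑ c : Fin n, if b = c then dq a b * dq a c else 0)
      = dq a b * dq a b := by intro a b; simp
  simp only [h1, h2]
  rw [sum_row_sq, sum_dq_sq]
  rfl

lemma inj3B (n : ℕ) :
    ∑ a : Fin n, ∑ b : Fin n, ∑ c : Fin n,
      (if a ≠ b ∧ a ≠ c ∧ b ≠ c then dq a b * dq b c else 0) = T3v n := by
  have pt : ∀ a b c : Fin n,
      (if a ≠ b ∧ a ≠ c ∧ b ≠ c then dq a b * dq b c else 0)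
      = dq a b * dq b c - (if a = c then dq a b * dq b c else 0) := by
    intro a b c
    rcases eq_or_ne a b with rfl | hab
    · simp [dq_self]
    rcases eq_or_ne b c with rfl | hbc
    · simp [dq_self]
    rcases eq_or_ne a c with rfl | hac
    · simp [Ne.symm hbc]
    · simp [hab, hac, hbc]
  simp only [pt, Finset.sum_sub_distrib]
  have h1 : ∑ a : Fin n, ∑ b : Fin n, ∑ c : Fin n, dq a b * dq b c
      = ∑ b : Fin n, (∑ a : Fin n, dq a b) * (∑ a : Fin n, dq a b) := by
    rw [Finset.sum_comm]
    refine Finset.sum_congr rfl fun b _ => ?_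
    rw [Finset.sum_mul_sum]
    refine Finset.sum_congr rfl fun a _ => Finset.sum_congr rfl fun c _ => by
      rw [dq_comm b c]
  have h2 : ∀ (a b : Fin n), (∑ c : Fin n, if a = c then dq a b * dq b c else 0)
      = dq a b * dq a b := by
    intro a b; simp [dq_comm b a]
  simp only [h1, h2]
  rw [sum_col_sq, sum_dq_sq]
  rfl

lemma inj3C (n : ℕ) :
    ∑ a : Fin n, ∑ b : Fin n, ∑ c : Fin n,
      (if a ≠ b ∧ a ≠ c ∧ b ≠ c then dq a b * dq c a else 0) = T3v n := by
  have pt : ∀ a b c : Fin n,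
      (if a ≠ b ∧ a ≠ c ∧ b ≠ c then dq a b * dq c a else 0)
      = dq a b * dq c a - (if b = c then dq a b * dq c a else 0) := by
    intro a b c
    rcases eq_or_ne a b with rfl | hab
    · simp [dq_self]
    rcases eq_or_ne a c with rfl | hac
    · simp [dq_self]
    rcases eq_or_ne b c with rfl | hbc
    · simp [hab]
    · simp [hab, hac, hbc]
  simp only [pt, Finset.sum_sub_distrib]
  have h1 : ∀ a : Fin n, ∑ b : Fin n, ∑ c : Fin n, dq a b * dq c a
      = (∑ b : Fin n, dq a b) * (∑ b : Fin n, dq a b) := by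
    intro a
    rw [Finset.sum_mul_sum]
    refine Finset.sum_congr rfl fun b _ => Finset.sum_congr rfl fun c _ => by
      rw [dq_comm c a]
  have h2 : ∀ (a b : Fin n), (∑ c : Fin n, if b = c then dq a b * dq c a else 0)
      = dq a b * dq a b := by
    intro a b; simp [dq_comm b a]
  simp only [h1, h2]
  rw [sum_row_sq, sum_dq_sq]
  rfl

lemma inj3D (n : ℕ) :
    ∑ a : Fin n, ∑ b : Fin n, ∑ c : Fin n,
      (if a ≠ b ∧ a ≠ c ∧ b ≠ c then dq a b * dq c b else 0) = T3v n := by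
  have pt : ∀ a b c : Fin n,
      (if a ≠ b ∧ a ≠ c ∧ b ≠ c then dq a b * dq c b else 0)
      = dq a b * dq c b - (if a = c then dq a b * dq c b else 0) := by
    intro a b c
    rcases eq_or_ne a b with rfl | hab
    · simp [dq_self]
    rcases eq_or_ne b c with rfl | hbc
    · simp [dq_self, hab]
    rcases eq_or_ne a c with rfl | hac
    · simp [Ne.symm hbc]
    · simp [hab, hac, hbc]
  simp only [pt, Finset.sum_sub_distrib]
  have h1 : ∑ a : Fin n, ∑ b : Fin n, ∑ c : Fin n, dq a b * dq c b
      = ∑ b : Fin n, (∑ a : Fin n, dq a b) * (∑ a : Fin n, dq a b) := by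
    rw [Finset.sum_comm]
    refine Finset.sum_congr rfl fun b _ => ?_
    rw [Finset.sum_mul_sum]
  have h2 : ∀ (a b : Fin n), (∑ c : Fin n, if a = c then dq a b * dq c b else 0)
      = dq a b * dq a b := by
    intro a b; simp
  simp only [h1, h2]
  rw [sum_col_sq, sum_dq_sq]
  rfl


def T4v (n : ℕ) : ℚ := (((n:ℚ)^3 - n)/3) * (((n:ℚ)^3 - n)/3)
  - 4 * ((7*(n:ℚ)^5 - 15*(n:ℚ)^3 + 8*(n:ℚ))/60) + 2 * (((n:ℚ)^4 - (n:ℚ)^2)/6)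

lemma inj4X (n : ℕ) :
    ∑ a : Fin n, ∑ b : Fin n, ∑ c : Fin n, ∑ e : Fin n,
      (if a ≠ b ∧ a ≠ c ∧ a ≠ e ∧ b ≠ c ∧ b ≠ e ∧ c ≠ e then dq a b * dq c e else 0)
      = T4v n := by
  have pt : ∀ a b c e : Fin n,
      (if a ≠ b ∧ a ≠ c ∧ a ≠ e ∧ b ≠ c ∧ b ≠ e ∧ c ≠ e then dq a b * dq c e else 0)
      = dq a b * dq c e
        - (if c = a then dq a b * dq c e else 0)
        - (if c = b then dq a b * dq c e else 0)
        - (if e = a then dq a b * dq c e else 0)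
        - (if e = b then dq a b * dq c e else 0)
        + (if c = a then (if e = b then dq a b * dq c e else 0) else 0)
        + (if c = b then (if e = a then dq a b * dq c e else 0) else 0) := by
    intro a b c e
    rcases eq_or_ne a b with rfl | hab
    · simp [dq_self]
    rcases eq_or_ne c e with rfl | hce
    · simp [dq_self]
    rcases eq_or_ne c a with rfl | hca
    · have h1 : c ≠ b := hab
      have h2 : e ≠ c := Ne.symm hce
      simp [hab, h1, h2, hce]
    rcases eq_or_ne c b with rfl | hcb
    · have h2 : e ≠ c := Ne.symm hce
      simp [hab, Ne.symm hab, hca, h2]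
    rcases eq_or_ne e a with rfl | hea
    · simp [hab, hca, hcb, Ne.symm hca]
    rcases eq_or_ne e b with rfl | heb
    · simp [hab, hca, hcb, hea, Ne.symm hcb]
    · simp [hab, hca, hcb, hea, heb, hce, Ne.symm hca, Ne.symm hcb, Ne.symm hea, Ne.symm heb]
  simp only [pt, Finset.sum_sub_distrib, Finset.sum_add_distrib]
  have hA : ∑ a : Fin n, ∑ b : Fin n, ∑ c : Fin n, ∑ e : Fin n, dq a b * dq c e
      = (∑ a : Fin n, ∑ b : Fin n, dq a b) * (∑ a : Fin n, ∑ b : Fin n, dq a b) := by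
    simp only [← Finset.mul_sum, ← Finset.sum_mul]
  have hca : ∑ a : Fin n, ∑ b : Fin n, ∑ c : Fin n, ∑ e : Fin n,
      (if c = a then dq a b * dq c e else 0)
      = ∑ a : Fin n, (∑ b : Fin n, dq a b) * (∑ b : Fin n, dq a b) := by
    refine Finset.sum_congr rfl fun a _ => ?_
    have : ∀ b : Fin n, ∑ c : Fin n, ∑ e : Fin n, (if c = a then dq a b * dq c e else 0)
        = ∑ e : Fin n, dq a b * dq a e := by
      intro b
      rw [Finset.sum_comm]
      refine Finset.sum_congr rfl fun e _ => ?_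
      simp
    simp only [this, ← Finset.mul_sum, ← Finset.sum_mul]
  have hcb : ∑ a : Fin n, ∑ b : Fin n, ∑ c : Fin n, ∑ e : Fin n,
      (if c = b then dq a b * dq c e else 0)
      = ∑ b : Fin n, (∑ a : Fin n, dq a b) * (∑ a : Fin n, dq b a) := by
    rw [Finset.sum_comm]
    refine Finset.sum_congr rfl fun b _ => ?_
    have : ∀ a : Fin n, ∑ c : Fin n, ∑ e : Fin n, (if c = b then dq a b * dq c e else 0)
        = ∑ e : Fin n, dq a b * dq b e := by
      intro a
      rw [Finset.sum_comm]
      refine Finset.sum_congr rfl fun e _ => ?_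
      simp
    simp only [this, ← Finset.mul_sum, ← Finset.sum_mul]
  have hea : ∑ a : Fin n, ∑ b : Fin n, ∑ c : Fin n, ∑ e : Fin n,
      (if e = a then dq a b * dq c e else 0)
      = ∑ a : Fin n, (∑ b : Fin n, dq a b) * (∑ c : Fin n, dq c a) := by
    refine Finset.sum_congr rfl fun a _ => ?_
    have : ∀ (b c : Fin n), ∑ e : Fin n, (if e = a then dq a b * dq c e else 0)
        = dq a b * dq c a := by intro b c; simp
    simp only [this, ← Finset.mul_sum, ← Finset.sum_mul]
  have heb : ∑ a : Fin n, ∑ b : Fin n, ∑ c : Fin n, ∑ e : Fin n,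
      (if e = b then dq a b * dq c e else 0)
      = ∑ b : Fin n, (∑ a : Fin n, dq a b) * (∑ c : Fin n, dq c b) := by
    rw [Finset.sum_comm]
    refine Finset.sum_congr rfl fun b _ => ?_
    have : ∀ (a c : Fin n), ∑ e : Fin n, (if e = b then dq a b * dq c e else 0)
        = dq a b * dq c b := by intro a c; simp
    simp only [this, ← Finset.mul_sum, ← Finset.sum_mul]
  have hc1 : ∑ a : Fin n, ∑ b : Fin n, ∑ c : Fin n, ∑ e : Fin n,
      (if c = a then (if e = b then dq a b * dq c e else 0) else 0)
      = ∑ a : Fin n, ∑ b : Fin n, dq a b * dq a b := by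
    refine Finset.sum_congr rfl fun a _ => Finset.sum_congr rfl fun b _ => ?_
    simp
  have hc2 : ∑ a : Fin n, ∑ b : Fin n, ∑ c : Fin n, ∑ e : Fin n,
      (if c = b then (if e = a then dq a b * dq c e else 0) else 0)
      = ∑ a : Fin n, ∑ b : Fin n, dq a b * dq a b := by
    refine Finset.sum_congr rfl fun a _ => Finset.sum_congr rfl fun b _ => ?_
    rw [show (∑ c : Fin n, ∑ e : Fin n,
        (if c = b then (if e = a then dq a b * dq c e else 0) else 0))
        = dq a b * dq b a from by simp]
    rw [dq_comm b a]
  rw [hA, hca, hcb, hea, heb, hc1, hc2]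
  have e1 : ∑ b : Fin n, (∑ a : Fin n, dq a b) * (∑ a : Fin n, dq b a)
      = (7*(n:ℚ)^5 - 15*(n:ℚ)^3 + 8*(n:ℚ))/60 := by
    rw [← sum_col_sq n]
    exact Finset.sum_congr rfl fun b _ => by rw [← col n b]
  have e2 : ∑ a : Fin n, (∑ b : Fin n, dq a b) * (∑ c : Fin n, dq c a)
      = (7*(n:ℚ)^5 - 15*(n:ℚ)^3 + 8*(n:ℚ))/60 := by
    rw [← sum_row_sq n]
    exact Finset.sum_congr rfl fun a _ => by rw [col n a]
  have e3 : ∑ b : Fin n, (∑ a : Fin n, dq a b) * (∑ c : Fin n, dq c b)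
      = (7*(n:ℚ)^5 - 15*(n:ℚ)^3 + 8*(n:ℚ))/60 := sum_col_sq n
  rw [e1, e2, e3, sum_dq, sum_row_sq, sum_dq_sq, T4v]
  ring


def c1q (n : ℕ) : ℚ := (Nat.factorial n : ℚ) * (((n:ℚ)+1)/3)
def c2q (n : ℕ) : ℚ := (Nat.factorial n : ℚ) * ((n:ℚ)*((n:ℚ)+1)/6)
def c3q (n : ℕ) : ℚ := (Nat.factorial n : ℚ) * (((n:ℚ)+1)*(7*(n:ℚ)+4)/60)
def c4q (n : ℕ) : ℚ := (Nat.factorial n : ℚ) * (((n:ℚ)+1)*(5*(n:ℚ)+4)/45)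

lemma card2ne {n : ℕ} {u v : Fin n} (h : u ≠ v) : ((n:ℚ)^2 - n) ≠ 0 := by
  have h2 : 1 < n := by
    rw [← Fintype.card_fin n]
    exact Fintype.one_lt_card_iff.mpr ⟨u, v, h⟩
  have hq : (1:ℚ) < (n:ℚ) := by exact_mod_cast h2
  have : (0:ℚ) < (n:ℚ)^2 - n := by nlinarith
  exact ne_of_gt this

lemma card3ne {n : ℕ} {u v w : Fin n} (h1 : u ≠ v) (h2 : u ≠ w) (h3 : v ≠ w) :
    ((n:ℚ)^3 - 3*(n:ℚ)^2 + 2*(n:ℚ)) ≠ 0 := by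
  have hcard : ({u, v, w} : Finset (Fin n)).card = 3 := by
    rw [Finset.card_insert_of_notMem (by simp [h1, h2]),
      Finset.card_insert_of_notMem (by simp [h3]), Finset.card_singleton]
  have h4 : 3 ≤ n := by
    have := Finset.card_le_univ ({u, v, w} : Finset (Fin n))
    rw [hcard] at this
    simpa using this
  have hq : (3:ℚ) ≤ (n:ℚ) := by exact_mod_cast h4
  have : (0:ℚ) < (n:ℚ)^3 - 3*(n:ℚ)^2 + 2*(n:ℚ) := by nlinarith
  exact ne_of_gt this

lemma card4ne {n : ℕ} {u v w x : Fin n} (h1 : u ≠ v) (h2 : u ≠ w) (h3 : u ≠ x)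
    (h4 : v ≠ w) (h5 : v ≠ x) (h6 : w ≠ x) :
    ((n:ℚ)^4 - 6*(n:ℚ)^3 + 11*(n:ℚ)^2 - 6*(n:ℚ)) ≠ 0 := by
  have hcard : ({u, v, w, x} : Finset (Fin n)).card = 4 := by
    rw [Finset.card_insert_of_notMem (by simp [h1, h2, h3]),
      Finset.card_insert_of_notMem (by simp [h4, h5]),
      Finset.card_insert_of_notMem (by simp [h6]), Finset.card_singleton]
  have h7 : 4 ≤ n := by
    have := Finset.card_le_univ ({u, v, w, x} : Finset (Fin n))
    rw [hcard] at this
    simpa using this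
  have hq : (4:ℚ) ≤ (n:ℚ) := by exact_mod_cast h7
  have h8 : (0:ℚ) < (n:ℚ)^4 - 6*(n:ℚ)^3 + 11*(n:ℚ)^2 - 6*(n:ℚ) := by
    have e : (n:ℚ)^4 - 6*(n:ℚ)^3 + 11*(n:ℚ)^2 - 6*(n:ℚ)
        = (n:ℚ)*((n:ℚ)-1)*((n:ℚ)-2)*((n:ℚ)-3) := by ring
    rw [e]
    have p1 : (0:ℚ) < (n:ℚ) := by linarith
    have p2 : (0:ℚ) < (n:ℚ)-1 := by linarith
    have p3 : (0:ℚ) < (n:ℚ)-2 := by linarith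
    have p4 : (0:ℚ) < (n:ℚ)-3 := by linarith
    positivity
  exact ne_of_gt h8

lemma val1 {n : ℕ} {u v : Fin n} (h : u ≠ v) :
    ∑ π : Equiv.Perm (Fin n), dq (π u) (π v) = c1q n := by
  have horb := orbit2 (fun a b => dq a b) u v h
  have hsum : (∑ a : Fin n, ∑ b : Fin n, if a ≠ b then dq a b else 0)
      = ((n:ℚ)^3 - n)/3 := by
    rw [← sum_dq n]
    refine Finset.sum_congr rfl fun a _ => Finset.sum_congr rfl fun b _ => ?_
    rcases eq_or_ne a b with rfl | hab
    · simp [dq_self]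
    · simp [hab]
  rw [hsum] at horb
  refine mul_left_cancel₀ (card2ne h) (horb.trans ?_)
  rw [c1q]
  push_cast [Nat.factorial]
  ring

lemma val2 {n : ℕ} {u v : Fin n} (h : u ≠ v) :
    ∑ π : Equiv.Perm (Fin n), dq (π u) (π v) * dq (π u) (π v) = c2q n := by
  have horb := orbit2 (fun a b => dq a b * dq a b) u v h
  have hsum : (∑ a : Fin n, ∑ b : Fin n, if a ≠ b then dq a b * dq a b else 0)
      = ((n:ℚ)^4 - (n:ℚ)^2)/6 := by
    rw [← sum_dq_sq n]
    refine Finset.sum_congr rfl fun a _ => Finset.sum_congr rfl fun b _ => ?_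
    rcases eq_or_ne a b with rfl | hab
    · simp [dq_self]
    · simp [hab]
  rw [hsum] at horb
  refine mul_left_cancel₀ (card2ne h) (horb.trans ?_)
  rw [c2q]
  ring

lemma val3A {n : ℕ} {u v w : Fin n} (h1 : u ≠ v) (h2 : u ≠ w) (h3 : v ≠ w) :
    ∑ π : Equiv.Perm (Fin n), dq (π u) (π v) * dq (π u) (π w) = c3q n := by
  have horb := orbit3 (fun a b c => dq a b * dq a c) u v w h1 h2 h3
  rw [inj3A n] at horb
  refine mul_left_cancel₀ (card3ne h1 h2 h3) (horb.trans ?_)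
  rw [c3q, T3v]
  ring

lemma val3B {n : ℕ} {u v w : Fin n} (h1 : u ≠ v) (h2 : u ≠ w) (h3 : v ≠ w) :
    ∑ π : Equiv.Perm (Fin n), dq (π u) (π v) * dq (π v) (π w) = c3q n := by
  have horb := orbit3 (fun a b c => dq a b * dq b c) u v w h1 h2 h3
  rw [inj3B n] at horb
  refine mul_left_cancel₀ (card3ne h1 h2 h3) (horb.trans ?_)
  rw [c3q, T3v]
  ring

lemma val3C {n : ℕ} {u v w : Fin n} (h1 : u ≠ v) (h2 : u ≠ w) (h3 : v ≠ w) :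
    ∑ π : Equiv.Perm (Fin n), dq (π u) (π v) * dq (π w) (π u) = c3q n := by
  have horb := orbit3 (fun a b c => dq a b * dq c a) u v w h1 h2 h3
  rw [inj3C n] at horb
  refine mul_left_cancel₀ (card3ne h1 h2 h3) (horb.trans ?_)
  rw [c3q, T3v]
  ring

lemma val3D {n : ℕ} {u v w : Fin n} (h1 : u ≠ v) (h2 : u ≠ w) (h3 : v ≠ w) :
    ∑ π : Equiv.Perm (Fin n), dq (π u) (π v) * dq (π w) (π v) = c3q n := by
  have horb := orbit3 (fun a b c => dq a b * dq c b) u v w h1 h2 h3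
  rw [inj3D n] at horb
  refine mul_left_cancel₀ (card3ne h1 h2 h3) (horb.trans ?_)
  rw [c3q, T3v]
  ring

lemma val4 {n : ℕ} {u v w x : Fin n} (h1 : u ≠ v) (h2 : u ≠ w) (h3 : u ≠ x)
    (h4 : v ≠ w) (h5 : v ≠ x) (h6 : w ≠ x) :
    ∑ π : Equiv.Perm (Fin n), dq (π u) (π v) * dq (π w) (π x) = c4q n := by
  have horb := orbit4 (fun a b c e => dq a b * dq c e) u v w x h1 h2 h3 h4 h5 h6
  rw [inj4X n] at horb
  refine mul_left_cancel₀ (card4ne h1 h2 h3 h4 h5 h6) (horb.trans ?_)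
  rw [c4q, T4v]
  ring

lemma quadval {n : ℕ} {u v u' v' : Fin n} (huv : u ≠ v) (huv' : u' ≠ v') :
    ∑ π : Equiv.Perm (Fin n), dq (π u) (π v) * dq (π u') (π v')
      = c4q n
        + (c3q n - c4q n) *
          ((if u' = u then (1:ℚ) else 0) + (if u' = v then (1:ℚ) else 0)
            + (if v' = u then (1:ℚ) else 0) + (if v' = v then (1:ℚ) else 0))
        + (c2q n - 2*c3q n + c4q n) *
          ((if u' = u then (1:ℚ) else 0) * (if v' = v then (1:ℚ) else 0)
            + (if u' = v then (1:ℚ) else 0) * (if v' = u then (1:ℚ) else 0)) := by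
  by_cases e1 : u' = u
  · by_cases e4 : v' = v
    · rw [e1, e4, val2 huv]
      simp [huv, Ne.symm huv]
      ring
    · rw [e1] at huv' ⊢
      rw [val3A huv huv' (fun hc => e4 hc.symm)]
      simp [huv, e4, Ne.symm huv']
  · by_cases e2 : u' = v
    · by_cases e3 : v' = u
      · rw [e2, e3]
        rw [show (∑ π : Equiv.Perm (Fin n), dq (π u) (π v) * dq (π v) (π u))
            = ∑ π : Equiv.Perm (Fin n), dq (π u) (π v) * dq (π u) (π v) from
          Finset.sum_congr rfl fun π _ => by rw [dq_comm (π v) (π u)]]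
        rw [val2 huv]
        simp [huv, Ne.symm huv]
        ring
      · rw [e2] at huv' ⊢
        rw [val3B huv (fun hc => e3 hc.symm) huv']
        simp [Ne.symm huv, e3, Ne.symm huv']
    · by_cases e3 : v' = u
      · rw [e3]
        rw [val3C huv (fun hc => e1 hc.symm) (fun hc => e2 hc.symm)]
        simp [e1, e2, huv]
      · by_cases e4 : v' = v
        · rw [e4]
          rw [val3D huv (fun hc => e1 hc.symm) (fun hc => e2 hc.symm)]
          simp [e1, e2, Ne.symm huv]
        · rw [val4 huv (fun hc => e1 hc.symm) (fun hc => e3 hc.symm)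
            (fun hc => e2 hc.symm) (fun hc => e4 hc.symm) huv']
          simp [e1, e2, e3, e4]


/-- For a simple graph `G` on `n` vertices with `m` edges and sum of squared degrees
`K = Σ_i k_i^2`, the variance of the sum of edge lengths `D` in a uniformly random
linear arrangement is `V[D] = ((n+1)/45)[m(2(n-1) - m) + (n/4 - 1) K]`. -/
theorem variance_sum_edge_lengths (n : ℕ) (G : SimpleGraph (Fin n))
    [DecidableRel G.Adj] :
    (∑ π : Equiv.Perm (Fin n),
        ((∑ u : Fin n, ∑ v : Fin n,
          if G.Adj u v then |((π u : ℕ) : ℚ) - ((π v : ℕ) : ℚ)| else 0) / 2) ^ 2)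
      / (Nat.factorial n : ℚ)
      - ((∑ π : Equiv.Perm (Fin n),
          (∑ u : Fin n, ∑ v : Fin n,
            if G.Adj u v then |((π u : ℕ) : ℚ) - ((π v : ℕ) : ℚ)| else 0) / 2)
          / (Nat.factorial n : ℚ)) ^ 2
      = (((n : ℚ) + 1) / 45) *
          ((G.edgeFinset.card : ℚ) * (2 * ((n : ℚ) - 1) - (G.edgeFinset.card : ℚ))
            + ((n : ℚ) / 4 - 1) * ∑ i : Fin n, (G.degree i : ℚ) ^ 2) := by
  classical
  have hFne : (Nat.factorial n : ℚ) ≠ 0 :=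
    Nat.cast_ne_zero.mpr (Nat.factorial_ne_zero n)
  set A : Fin n → Fin n → ℚ := fun u v => if G.Adj u v then (1:ℚ) else 0 with hA
  have hrew : ∀ π : Equiv.Perm (Fin n),
      (∑ u : Fin n, ∑ v : Fin n,
        if G.Adj u v then |((π u : ℕ) : ℚ) - ((π v : ℕ) : ℚ)| else 0)
      = ∑ u : Fin n, ∑ v : Fin n, A u v * dq (π u) (π v) := by
    intro π
    refine Finset.sum_congr rfl fun u _ => Finset.sum_congr rfl fun v _ => ?_
    by_cases h : G.Adj u v <;> simp [hA, h, dq]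
  have hdeg : ∀ u : Fin n, (∑ v : Fin n, A u v) = (G.degree u : ℚ) := by
    intro u
    rw [SimpleGraph.degree]
    simp [hA, SimpleGraph.neighborFinset, Finset.sum_boole, Set.toFinset]
    rw [Fintype.card_subtype]
  have hdeg' : ∀ v : Fin n, (∑ u : Fin n, A u v) = (G.degree v : ℚ) := by
    intro v
    rw [← hdeg v]
    exact Finset.sum_congr rfl fun u _ => by simp [hA, SimpleGraph.adj_comm]
  have hAA : ∑ u : Fin n, ∑ v : Fin n, A u v = 2 * (G.edgeFinset.card : ℚ) := by
    rw [Finset.sum_congr rfl fun u (_ : u ∈ univ) => hdeg u]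
    have h2 := SimpleGraph.sum_degrees_eq_twice_card_edges G
    have : ∑ u : Fin n, (G.degree u : ℚ) = ((∑ u : Fin n, G.degree u : ℕ) : ℚ) := by
      push_cast; rfl
    rw [this, h2]
    push_cast; ring
  -- first moment
  have hD1 : ∑ π : Equiv.Perm (Fin n), (∑ u : Fin n, ∑ v : Fin n, A u v * dq (π u) (π v))
      = (2 * (G.edgeFinset.card : ℚ)) * c1q n := by
    rw [Finset.sum_comm]
    have step1 : ∀ u : Fin n,
        (∑ π : Equiv.Perm (Fin n), ∑ v : Fin n, A u v * dq (π u) (π v))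
        = ∑ v : Fin n, A u v * c1q n := by
      intro u
      rw [Finset.sum_comm]
      refine Finset.sum_congr rfl fun v _ => ?_
      by_cases h : G.Adj u v
      · rw [← Finset.mul_sum, val1 (G.ne_of_adj h)]
      · simp [hA, h]
    rw [Finset.sum_congr rfl fun u (_ : u ∈ univ) => step1 u]
    have hpull : ∀ u : Fin n, ∑ v : Fin n, A u v * c1q n = (∑ v : Fin n, A u v) * c1q n :=
      fun u => (Finset.sum_mul _ _ _).symm
    rw [Finset.sum_congr rfl fun u (_ : u ∈ univ) => hpull u, ← Finset.sum_mul, hAA]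
  have hAsymm : ∀ u v : Fin n, A v u = A u v := by
    intro u v; simp [hA, SimpleGraph.adj_comm]
  have hAidem : ∀ u v : Fin n, A u v * A u v = A u v := by
    intro u v; by_cases h : G.Adj u v <;> simp [hA, h]
  -- component sums
  have S0 : ∑ u : Fin n, ∑ v : Fin n, ∑ u' : Fin n, ∑ v' : Fin n, A u v * A u' v'
      = (2 * (G.edgeFinset.card : ℚ)) * (2 * (G.edgeFinset.card : ℚ)) := by
    have inner : ∀ u v : Fin n, ∑ u' : Fin n, ∑ v' : Fin n, A u v * A u' v'
        = A u v * (2 * (G.edgeFinset.card : ℚ)) := by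
      intro u v
      simp only [← Finset.mul_sum]
      rw [hAA]
    rw [Finset.sum_congr rfl fun u (_ : u ∈ univ) =>
      Finset.sum_congr rfl fun v (_ : v ∈ univ) => inner u v]
    simp only [← Finset.sum_mul]
    rw [hAA]
  have hself : ∀ u : Fin n, (G.degree u : ℚ) * (G.degree u : ℚ) = (G.degree u : ℚ)^2 := by
    intro u; ring
  have S1 : ∑ u : Fin n, ∑ v : Fin n, ∑ u' : Fin n, ∑ v' : Fin n,
      (A u v * A u' v') * (if u' = u then (1:ℚ) else 0)
      = ∑ i : Fin n, (G.degree i : ℚ)^2 := by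
    have inner : ∀ u v : Fin n, ∑ u' : Fin n, ∑ v' : Fin n,
        (A u v * A u' v') * (if u' = u then (1:ℚ) else 0)
        = A u v * (G.degree u : ℚ) := by
      intro u v
      have h1 : ∀ u' : Fin n, ∑ v' : Fin n, (A u v * A u' v') * (if u' = u then (1:ℚ) else 0)
          = (if u' = u then A u v * (∑ v' : Fin n, A u' v') else 0) := by
        intro u'
        by_cases h : u' = u
        · subst h; simp [← Finset.mul_sum]
        · simp [h]
      rw [Finset.sum_congr rfl fun u' (_ : u' ∈ univ) => h1 u']
      simp [hdeg u]
    rw [Finset.sum_congr rfl fun u (_ : u ∈ univ) =>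
      Finset.sum_congr rfl fun v (_ : v ∈ univ) => inner u v]
    refine Finset.sum_congr rfl fun u _ => ?_
    rw [← Finset.sum_mul, hdeg u, hself u]
  have S2 : ∑ u : Fin n, ∑ v : Fin n, ∑ u' : Fin n, ∑ v' : Fin n,
      (A u v * A u' v') * (if u' = v then (1:ℚ) else 0)
      = ∑ i : Fin n, (G.degree i : ℚ)^2 := by
    have inner : ∀ u v : Fin n, ∑ u' : Fin n, ∑ v' : Fin n,
        (A u v * A u' v') * (if u' = v then (1:ℚ) else 0)
        = A u v * (G.degree v : ℚ) := by
      intro u v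
      have h1 : ∀ u' : Fin n, ∑ v' : Fin n, (A u v * A u' v') * (if u' = v then (1:ℚ) else 0)
          = (if u' = v then A u v * (∑ v' : Fin n, A u' v') else 0) := by
        intro u'
        by_cases h : u' = v
        · subst h; simp [← Finset.mul_sum]
        · simp [h]
      rw [Finset.sum_congr rfl fun u' (_ : u' ∈ univ) => h1 u']
      simp [hdeg v]
    rw [Finset.sum_congr rfl fun u (_ : u ∈ univ) =>
      Finset.sum_congr rfl fun v (_ : v ∈ univ) => inner u v]
    rw [Finset.sum_comm]
    refine Finset.sum_congr rfl fun v _ => ?_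
    rw [← Finset.sum_mul, hdeg' v, hself v]
  have S3 : ∑ u : Fin n, ∑ v : Fin n, ∑ u' : Fin n, ∑ v' : Fin n,
      (A u v * A u' v') * (if v' = u then (1:ℚ) else 0)
      = ∑ i : Fin n, (G.degree i : ℚ)^2 := by
    have inner : ∀ u v : Fin n, ∑ u' : Fin n, ∑ v' : Fin n,
        (A u v * A u' v') * (if v' = u then (1:ℚ) else 0)
        = A u v * (G.degree u : ℚ) := by
      intro u v
      have h1 : ∀ u' : Fin n, ∑ v' : Fin n, (A u v * A u' v') * (if v' = u then (1:ℚ) else 0)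
          = A u v * A u' u := by
        intro u'
        rw [Finset.sum_eq_single u]
        · simp
        · intro b _ hb; simp [hb]
        · intro h; exact absurd (Finset.mem_univ u) h
      rw [Finset.sum_congr rfl fun u' (_ : u' ∈ univ) => h1 u']
      rw [← Finset.mul_sum, hdeg' u]
    rw [Finset.sum_congr rfl fun u (_ : u ∈ univ) =>
      Finset.sum_congr rfl fun v (_ : v ∈ univ) => inner u v]
    refine Finset.sum_congr rfl fun u _ => ?_
    rw [← Finset.sum_mul, hdeg u, hself u]
  have S4 : ∑ u : Fin n, ∑ v : Fin n, ∑ u' : Fin n, ∑ v' : Fin n,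
      (A u v * A u' v') * (if v' = v then (1:ℚ) else 0)
      = ∑ i : Fin n, (G.degree i : ℚ)^2 := by
    have inner : ∀ u v : Fin n, ∑ u' : Fin n, ∑ v' : Fin n,
        (A u v * A u' v') * (if v' = v then (1:ℚ) else 0)
        = A u v * (G.degree v : ℚ) := by
      intro u v
      have h1 : ∀ u' : Fin n, ∑ v' : Fin n, (A u v * A u' v') * (if v' = v then (1:ℚ) else 0)
          = A u v * A u' v := by
        intro u'
        rw [Finset.sum_eq_single v]
        · simp
        · intro b _ hb; simp [hb]
        · intro h; exact absurd (Finset.mem_univ v) h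
      rw [Finset.sum_congr rfl fun u' (_ : u' ∈ univ) => h1 u']
      rw [← Finset.mul_sum, hdeg' v]
    rw [Finset.sum_congr rfl fun u (_ : u ∈ univ) =>
      Finset.sum_congr rfl fun v (_ : v ∈ univ) => inner u v]
    rw [Finset.sum_comm]
    refine Finset.sum_congr rfl fun v _ => ?_
    rw [← Finset.sum_mul, hdeg' v, hself v]
  have S5 : ∑ u : Fin n, ∑ v : Fin n, ∑ u' : Fin n, ∑ v' : Fin n,
      (A u v * A u' v') * ((if u' = u then (1:ℚ) else 0) * (if v' = v then (1:ℚ) else 0))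
      = 2 * (G.edgeFinset.card : ℚ) := by
    have inner : ∀ u v : Fin n, ∑ u' : Fin n, ∑ v' : Fin n,
        (A u v * A u' v') * ((if u' = u then (1:ℚ) else 0) * (if v' = v then (1:ℚ) else 0))
        = A u v := by
      intro u v
      rw [Finset.sum_eq_single u]
      · rw [Finset.sum_eq_single v]
        · simp [hAidem]
        · intro b _ hb; simp [hb]
        · intro h; exact absurd (Finset.mem_univ v) h
      · intro b _ hb
        simp [hb]
      · intro h; exact absurd (Finset.mem_univ u) h
    rw [Finset.sum_congr rfl fun u (_ : u ∈ univ) =>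
      Finset.sum_congr rfl fun v (_ : v ∈ univ) => inner u v]
    exact hAA
  have S6 : ∑ u : Fin n, ∑ v : Fin n, ∑ u' : Fin n, ∑ v' : Fin n,
      (A u v * A u' v') * ((if u' = v then (1:ℚ) else 0) * (if v' = u then (1:ℚ) else 0))
      = 2 * (G.edgeFinset.card : ℚ) := by
    have inner : ∀ u v : Fin n, ∑ u' : Fin n, ∑ v' : Fin n,
        (A u v * A u' v') * ((if u' = v then (1:ℚ) else 0) * (if v' = u then (1:ℚ) else 0))
        = A u v := by
      intro u v
      rw [Finset.sum_eq_single v]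
      · rw [Finset.sum_eq_single u]
        · rw [hAsymm u v]
          simp [hAidem]
        · intro b _ hb; simp [hb]
        · intro h; exact absurd (Finset.mem_univ u) h
      · intro b _ hb
        simp [hb]
      · intro h; exact absurd (Finset.mem_univ v) h
    rw [Finset.sum_congr rfl fun u (_ : u ∈ univ) =>
      Finset.sum_congr rfl fun v (_ : v ∈ univ) => inner u v]
    exact hAA
  -- second moment
  have hD2 : ∑ π : Equiv.Perm (Fin n),
      (∑ u : Fin n, ∑ v : Fin n, A u v * dq (π u) (π v))
        * (∑ u : Fin n, ∑ v : Fin n, A u v * dq (π u) (π v))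
      = c4q n * ((2 * (G.edgeFinset.card : ℚ)) * (2 * (G.edgeFinset.card : ℚ)))
        + (c3q n - c4q n) * (4 * ∑ i : Fin n, (G.degree i : ℚ)^2)
        + (c2q n - 2*c3q n + c4q n) * (2 * (2 * (G.edgeFinset.card : ℚ))) := by
    have step_a : ∀ π : Equiv.Perm (Fin n),
        (∑ u : Fin n, ∑ v : Fin n, A u v * dq (π u) (π v))
          * (∑ u : Fin n, ∑ v : Fin n, A u v * dq (π u) (π v))
        = ∑ u : Fin n, ∑ v : Fin n, ∑ u' : Fin n, ∑ v' : Fin n,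
            (A u v * A u' v') * (dq (π u) (π v) * dq (π u') (π v')) := by
      intro π
      rw [Finset.sum_mul]
      refine Finset.sum_congr rfl fun u _ => ?_
      rw [Finset.sum_mul]
      refine Finset.sum_congr rfl fun v _ => ?_
      rw [Finset.mul_sum]
      refine Finset.sum_congr rfl fun u' _ => ?_
      rw [Finset.mul_sum]
      refine Finset.sum_congr rfl fun v' _ => ?_
      ring
    rw [Finset.sum_congr rfl fun π (_ : π ∈ univ) => step_a π]
    rw [Finset.sum_comm]
    rw [show (∑ u : Fin n, ∑ π : Equiv.Perm (Fin n), ∑ v : Fin n, ∑ u' : Fin n, ∑ v' : Fin n,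
        (A u v * A u' v') * (dq (π u) (π v) * dq (π u') (π v')))
        = ∑ u : Fin n, ∑ v : Fin n, ∑ u' : Fin n, ∑ v' : Fin n, ∑ π : Equiv.Perm (Fin n),
        (A u v * A u' v') * (dq (π u) (π v) * dq (π u') (π v')) from
      Finset.sum_congr rfl fun u _ => by
        rw [Finset.sum_comm]
        refine Finset.sum_congr rfl fun v _ => ?_
        rw [Finset.sum_comm]
        refine Finset.sum_congr rfl fun u' _ => ?_
        exact Finset.sum_comm]
    have hquad : ∀ u v u' v' : Fin n,
        (∑ π : Equiv.Perm (Fin n),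
          (A u v * A u' v') * (dq (π u) (π v) * dq (π u') (π v')))
        = (A u v * A u' v') *
          (c4q n
            + (c3q n - c4q n) *
              ((if u' = u then (1:ℚ) else 0) + (if u' = v then (1:ℚ) else 0)
                + (if v' = u then (1:ℚ) else 0) + (if v' = v then (1:ℚ) else 0))
            + (c2q n - 2*c3q n + c4q n) *
              ((if u' = u then (1:ℚ) else 0) * (if v' = v then (1:ℚ) else 0)
                + (if u' = v then (1:ℚ) else 0) * (if v' = u then (1:ℚ) else 0))) := by
      intro u v u' v'
      by_cases h1 : G.Adj u v
      · by_cases h2 : G.Adj u' v'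
        · rw [← Finset.mul_sum, quadval (G.ne_of_adj h1) (G.ne_of_adj h2)]
        · have : A u' v' = 0 := by simp [hA, h2]
          simp [this]
      · have : A u v = 0 := by simp [hA, h1]
        simp [this]
    rw [Finset.sum_congr rfl fun u (_ : u ∈ univ) =>
      Finset.sum_congr rfl fun v (_ : v ∈ univ) =>
      Finset.sum_congr rfl fun u' (_ : u' ∈ univ) =>
      Finset.sum_congr rfl fun v' (_ : v' ∈ univ) => hquad u v u' v']
    have expand : ∀ u v u' v' : Fin n,
        (A u v * A u' v') *
          (c4q n
            + (c3q n - c4q n) *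
              ((if u' = u then (1:ℚ) else 0) + (if u' = v then (1:ℚ) else 0)
                + (if v' = u then (1:ℚ) else 0) + (if v' = v then (1:ℚ) else 0))
            + (c2q n - 2*c3q n + c4q n) *
              ((if u' = u then (1:ℚ) else 0) * (if v' = v then (1:ℚ) else 0)
                + (if u' = v then (1:ℚ) else 0) * (if v' = u then (1:ℚ) else 0)))
        = c4q n * (A u v * A u' v')
          + (c3q n - c4q n) * ((A u v * A u' v') * (if u' = u then (1:ℚ) else 0))
          + (c3q n - c4q n) * ((A u v * A u' v') * (if u' = v then (1:ℚ) else 0))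
          + (c3q n - c4q n) * ((A u v * A u' v') * (if v' = u then (1:ℚ) else 0))
          + (c3q n - c4q n) * ((A u v * A u' v') * (if v' = v then (1:ℚ) else 0))
          + (c2q n - 2*c3q n + c4q n) *
              ((A u v * A u' v') * ((if u' = u then (1:ℚ) else 0) * (if v' = v then (1:ℚ) else 0)))
          + (c2q n - 2*c3q n + c4q n) *
              ((A u v * A u' v') * ((if u' = v then (1:ℚ) else 0) * (if v' = u then (1:ℚ) else 0))) := by
      intro u v u' v'
      ring
    rw [Finset.sum_congr rfl fun u (_ : u ∈ univ) =>
      Finset.sum_congr rfl fun v (_ : v ∈ univ) =>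
      Finset.sum_congr rfl fun u' (_ : u' ∈ univ) =>
      Finset.sum_congr rfl fun v' (_ : v' ∈ univ) => expand u v u' v']
    have pull4 : ∀ (c : ℚ) (f : Fin n → Fin n → Fin n → Fin n → ℚ),
        (∑ u : Fin n, ∑ v : Fin n, ∑ u' : Fin n, ∑ v' : Fin n, c * f u v u' v')
          = c * ∑ u : Fin n, ∑ v : Fin n, ∑ u' : Fin n, ∑ v' : Fin n, f u v u' v' := by
      intro c f
      simp only [← Finset.mul_sum]
    simp only [Finset.sum_add_distrib]
    rw [pull4 (c4q n) (fun u v u' v' => A u v * A u' v'),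
      pull4 (c3q n - c4q n) (fun u v u' v' => A u v * A u' v' * if u' = u then (1:ℚ) else 0),
      pull4 (c3q n - c4q n) (fun u v u' v' => A u v * A u' v' * if u' = v then (1:ℚ) else 0),
      pull4 (c3q n - c4q n) (fun u v u' v' => A u v * A u' v' * if v' = u then (1:ℚ) else 0),
      pull4 (c3q n - c4q n) (fun u v u' v' => A u v * A u' v' * if v' = v then (1:ℚ) else 0),
      pull4 (c2q n - 2*c3q n + c4q n)
        (fun u v u' v' => A u v * A u' v' * ((if u' = u then (1:ℚ) else 0) * if v' = v then (1:ℚ) else 0)),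
      pull4 (c2q n - 2*c3q n + c4q n)
        (fun u v u' v' => A u v * A u' v' * ((if u' = v then (1:ℚ) else 0) * if v' = u then (1:ℚ) else 0))]
    rw [S0, S1, S2, S3, S4, S5, S6]
    ring
  simp only [hrew]
  have e1 : ∀ f : Equiv.Perm (Fin n) → ℚ,
      ∑ π : Equiv.Perm (Fin n), (f π / 2)^2
        = (∑ π : Equiv.Perm (Fin n), f π * f π)/4 := by
    intro f
    rw [show (∑ π : Equiv.Perm (Fin n), (f π / 2)^2)
        = ∑ π : Equiv.Perm (Fin n), (f π * f π)/4 from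
      Finset.sum_congr rfl fun π _ => by ring, ← Finset.sum_div]
  have e2 : ∀ f : Equiv.Perm (Fin n) → ℚ,
      ∑ π : Equiv.Perm (Fin n), f π / 2 = (∑ π : Equiv.Perm (Fin n), f π)/2 :=
    fun f => (Finset.sum_div _ _ _).symm
  rw [e1 (fun π => ∑ u : Fin n, ∑ v : Fin n, A u v * dq (π u) (π v)),
    e2 (fun π => ∑ u : Fin n, ∑ v : Fin n, A u v * dq (π u) (π v)), hD2, hD1]
  simp only [c1q, c2q, c3q, c4q]
  field_simp
  ring
end
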